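/- arXiv:math/0502011 — 4 statements merged into one kernel-verified Lean document; each statement's English description precedes it below -/
import Mathlib

section
/- Let k ≥ 1 be an integer and c ≥ 1 a real number. Suppose there exist a real number σ₀ ≥ c and a function Z analytic on the half-plane {s : Re s > c} such that for every s with Re s > σ₀ the integral ∫₁^∞ |ζ(1/2+ix)|^{2k} x^{-s} dx converges absolutely and equals Z(s), and such that for every ε > 0 one has sup_{t ∈ ℝ} |Z(c+ε+it)| < ∞. Then for every ε > 0 there is a constant C(ε) such that ∫₀^T |ζ(1/2+it)|^{2k} dt ≤ C(ε)·T^{c+ε} for all T ≥ 1. -/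
open MeasureTheory Set Complex Filter

/-- `|ζ(1/2 + i x)|^(2k)` -/
noncomputable def zetaPow (k : ℕ) (x : ℝ) : ℝ :=
  ‖riemannZeta (1/2 + x * Complex.I)‖ ^ (2 * k)

lemma zetaPow_continuous (k : ℕ) : Continuous (zetaPow k) := by
  apply Continuous.pow
  apply Continuous.norm
  rw [continuous_iff_continuousAt]
  intro x
  have h1 : (1/2 + (x:ℂ) * Complex.I) ≠ 1 := by
    intro h
    have := congrArg Complex.re h
    simp at this
  have : ContinuousAt (fun y : ℝ => (1/2 + (y:ℂ) * Complex.I)) x := by fun_prop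
  show ContinuousAt (riemannZeta ∘ fun y : ℝ => (1/2 + (y:ℂ) * Complex.I)) x
  exact ContinuousAt.comp (f := fun y : ℝ => (1/2 + (y:ℂ) * Complex.I)) (x := x)
    (differentiableAt_riemannZeta h1).continuousAt this

lemma zetaPow_nonneg (k : ℕ) (x : ℝ) : 0 ≤ zetaPow k x :=
  pow_nonneg (norm_nonneg _) _

lemma log_pow_le_rpow {n : ℕ} {δ x : ℝ} (hδ : 0 < δ) (hx : 1 ≤ x) :
    (Real.log x) ^ n ≤ ((n+1)/δ) ^ n * x ^ δ := by
  have hx0 : (0:ℝ) < x := lt_of_lt_of_le one_pos hx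
  have hrp : (0:ℝ) < x ^ (δ/(n+1)) := Real.rpow_pos_of_pos hx0 _
  have hn1 : (0:ℝ) < (n:ℝ) + 1 := by positivity
  have hlog : Real.log x ≤ ((n+1)/δ) * x ^ (δ/(n+1)) := by
    have h1 : Real.log (x ^ (δ/(n+1))) = (δ/(n+1)) * Real.log x := Real.log_rpow hx0 _
    have h2 : Real.log (x ^ (δ/(n+1))) ≤ x ^ (δ/(n+1)) :=
      (Real.log_le_sub_one_of_pos hrp).trans (by linarith)
    have h3 : Real.log x = ((n+1)/δ) * Real.log (x ^ (δ/(n+1))) := by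
      rw [h1]; field_simp
    rw [h3]
    have : 0 ≤ ((n:ℝ)+1)/δ := by positivity
    exact mul_le_mul_of_nonneg_left h2 this
  calc (Real.log x) ^ n ≤ (((n+1)/δ) * x ^ (δ/(n+1))) ^ n := by
        apply pow_le_pow_left₀ (Real.log_nonneg hx) hlog
    _ = ((n+1)/δ) ^ n * (x ^ (δ/(n+1))) ^ n := mul_pow _ _ _
    _ = ((n+1)/δ) ^ n * x ^ (δ/(n+1) * n) := by
        rw [← Real.rpow_natCast (x ^ (δ/(n+1))) n, ← Real.rpow_mul hx0.le]
    _ ≤ ((n+1)/δ) ^ n * x ^ δ := by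
        apply mul_le_mul_of_nonneg_left _ (by positivity)
        apply Real.rpow_le_rpow_of_exponent_le hx
        rw [div_mul_eq_mul_div, mul_comm]
        apply div_le_of_le_mul₀ hn1.le hδ.le
        · nlinarith

lemma landau {f : ℝ → ℝ} (hf_cont : Continuous f) (hf_nonneg : ∀ x, 0 ≤ f x)
    {c σ₀ : ℝ} (hc : 0 < c) (hcσ : c ≤ σ₀) {Z : ℂ → ℂ}
    (hZd : DifferentiableOn ℂ Z {s : ℂ | c < s.re})
    (hZint : ∀ s : ℂ, σ₀ < s.re →
      IntegrableOn (fun x : ℝ => (f x : ℂ) * (x:ℂ) ^ (-s)) (Ioi (1:ℝ)) ∧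
      (∫ x in Ioi (1:ℝ), (f x : ℂ) * (x:ℂ) ^ (-s)) = Z s)
    {σ₁ : ℝ} (hσ₁c : c < σ₁) (hσ₁a : σ₁ < σ₀ + 1) :
    IntegrableOn (fun x => f x * x ^ (-σ₁)) (Ioi (1:ℝ)) := by
  -- measurability
  have hmeasn : ∀ (n : ℕ) (σ : ℝ), AEStronglyMeasurable
      (fun x : ℝ => f x * (Real.log x) ^ n * x ^ (-σ)) (volume.restrict (Ioi 1)) := by
    intro n σ
    apply ContinuousOn.aestronglyMeasurable _ measurableSet_Ioi
    intro x hx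
    have hx0 : (0:ℝ) < x := lt_trans one_pos hx
    exact (((hf_cont.continuousAt).mul ((Real.continuousAt_log (ne_of_gt hx0)).pow n)).mul
      (Real.continuousAt_rpow_const x (-σ) (Or.inl (ne_of_gt hx0)))).continuousWithinAt
  -- real integrability for σ > σ₀
  have hInt : ∀ σ : ℝ, σ₀ < σ → IntegrableOn (fun x => f x * x ^ (-σ)) (Ioi (1:ℝ)) := by
    intro σ hσ
    have h1 := (hZint (σ:ℂ) (by simpa using hσ)).1.norm
    apply h1.congr
    filter_upwards [ae_restrict_mem measurableSet_Ioi] with x hx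
    have hx0 : (0:ℝ) < x := lt_trans one_pos hx
    rw [norm_mul, Complex.norm_real, Real.norm_eq_abs, _root_.abs_of_nonneg (hf_nonneg x),
      Complex.norm_cpow_eq_rpow_re_of_pos hx0]
    simp
  -- integrability with log powers
  have hIntLog : ∀ (n : ℕ) (σ : ℝ), σ₀ < σ →
      IntegrableOn (fun x => f x * (Real.log x) ^ n * x ^ (-σ)) (Ioi (1:ℝ)) := by
    intro n σ hσ
    set δ := (σ - σ₀)/2 with hδdef
    have hδ : 0 < δ := by rw [hδdef]; linarith
    have hσ' : σ₀ < σ - δ := by rw [hδdef]; linarith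
    have hbig := (hInt (σ - δ) hσ').const_mul ((((n:ℝ)+1)/δ)^n)
    apply Integrable.mono' hbig (hmeasn n σ)
    filter_upwards [ae_restrict_mem measurableSet_Ioi] with x hx
    have hx1 : (1:ℝ) ≤ x := le_of_lt hx
    have hx0 : (0:ℝ) < x := lt_of_lt_of_le one_pos hx1
    have hlogpow := log_pow_le_rpow (n := n) hδ hx1
    have hnn : 0 ≤ f x * Real.log x ^ n * x ^ (-σ) :=
      mul_nonneg (mul_nonneg (hf_nonneg x) (pow_nonneg (Real.log_nonneg hx1) n))
        (Real.rpow_nonneg hx0.le _)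
    rw [Real.norm_eq_abs, _root_.abs_of_nonneg hnn]
    have key : x ^ δ * x ^ (-σ) = x ^ (-(σ - δ)) := by
      rw [← Real.rpow_add hx0]; ring_nf
    calc f x * Real.log x ^ n * x ^ (-σ)
        ≤ f x * ((((n:ℝ)+1)/δ)^n * x ^ δ) * x ^ (-σ) :=
          mul_le_mul_of_nonneg_right (mul_le_mul_of_nonneg_left hlogpow (hf_nonneg x))
            (Real.rpow_nonneg hx0.le _)
      _ = (((n:ℝ)+1)/δ)^n * (f x * (x ^ δ * x ^ (-σ))) := by ring
      _ = (((n:ℝ)+1)/δ)^n * (f x * x ^ (-(σ - δ))) := by rw [key]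
  -- complex integrand measurability
  have hPmeas : ∀ (n : ℕ) (s : ℂ), AEStronglyMeasurable
      (fun x : ℝ => (f x : ℂ) * (-Complex.ofReal (Real.log x))^n * (x:ℂ)^(-s))
      (volume.restrict (Ioi 1)) := by
    intro n s
    apply ContinuousOn.aestronglyMeasurable _ measurableSet_Ioi
    intro x hx
    have hx0 : (0:ℝ) < x := lt_trans one_pos hx
    have h1 : ContinuousAt (fun x : ℝ => (x:ℂ)^(-s)) x := by
      exact ContinuousAt.comp (f := fun x : ℝ => (x:ℂ))
        (continuousAt_cpow_const (Complex.ofReal_mem_slitPlane.2 hx0))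
        Complex.continuous_ofReal.continuousAt
    have h2 : ContinuousAt (fun x : ℝ => (-Complex.ofReal (Real.log x))^n) x := by
      apply ContinuousAt.pow
      apply ContinuousAt.neg
      exact ContinuousAt.comp (f := Real.log) Complex.continuous_ofReal.continuousAt
        (Real.continuousAt_log (ne_of_gt hx0))
    exact (((Complex.continuous_ofReal.comp hf_cont).continuousAt.mul h2).mul
      h1).continuousWithinAt
  -- norm of complex integrand
  have hPnorm : ∀ (n : ℕ) (s : ℂ) (x : ℝ), 1 ≤ x →
      ‖(f x : ℂ) * (-Complex.ofReal (Real.log x))^n * (x:ℂ)^(-s)‖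
        = f x * (Real.log x)^n * x ^ (-s.re) := by
    intro n s x hx1
    have hx0 : (0:ℝ) < x := lt_of_lt_of_le one_pos hx1
    rw [norm_mul, norm_mul, norm_pow, norm_neg, Complex.norm_real, Complex.norm_real,
      Real.norm_eq_abs, Real.norm_eq_abs, _root_.abs_of_nonneg (hf_nonneg x),
      _root_.abs_of_nonneg (Real.log_nonneg hx1),
      Complex.norm_cpow_eq_rpow_re_of_pos hx0]
    simp
  -- complex integrability
  have hPint : ∀ (n : ℕ) (s : ℂ), σ₀ < s.re → Integrable
      (fun x : ℝ => (f x:ℂ) * (-Complex.ofReal (Real.log x))^n * (x:ℂ)^(-s))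
      (volume.restrict (Ioi 1)) := by
    intro n s hs
    apply Integrable.mono' (hIntLog n s.re hs) (hPmeas n s)
    filter_upwards [ae_restrict_mem measurableSet_Ioi] with x hx
    rw [hPnorm n s x hx.le]
  -- differentiation under the integral sign
  have hZnderiv : ∀ (n : ℕ) (s : ℂ), σ₀ < s.re →
      HasDerivAt (fun u : ℂ => ∫ x in Ioi (1:ℝ),
          (f x:ℂ) * (-Complex.ofReal (Real.log x))^n * (x:ℂ)^(-u))
        (∫ x in Ioi (1:ℝ), (f x:ℂ) * (-Complex.ofReal (Real.log x))^(n+1) * (x:ℂ)^(-s)) s := by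
    intro n s hs
    set ε := (s.re - σ₀)/2 with hεdef
    have hε : 0 < ε := by rw [hεdef]; linarith
    have key := hasDerivAt_integral_of_dominated_loc_of_deriv_le (μ := volume.restrict (Ioi 1))
      (F := fun (u : ℂ) (x : ℝ) => (f x:ℂ) * (-Complex.ofReal (Real.log x))^n * (x:ℂ)^(-u))
      (F' := fun (u : ℂ) (x : ℝ) => (f x:ℂ) * (-Complex.ofReal (Real.log x))^(n+1) * (x:ℂ)^(-u))
      (x₀ := s) (bound := fun x => f x * (Real.log x)^(n+1) * x ^ (-(σ₀ + ε))) (Metric.ball_mem_nhds s hε)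
      (Eventually.of_forall fun u => hPmeas n u) (hPint n s hs) (hPmeas (n+1) s)
      ?_ (hIntLog (n+1) (σ₀ + ε) (by linarith)) ?_
    · exact key.2
    · -- bound
      filter_upwards [ae_restrict_mem measurableSet_Ioi] with x hx
      intro u hu
      rw [hPnorm (n+1) u x hx.le]
      have hre : σ₀ + ε ≤ u.re := by
        have h2 : ‖u - s‖ < ε := by
          have := Metric.mem_ball.mp hu
          rwa [dist_eq_norm] at this
        have h3 : |u.re - s.re| ≤ ‖u - s‖ := by
          have := Complex.abs_re_le_norm (u - s)
          simpa [Complex.sub_re] using this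
        have h4 := abs_lt.mp (lt_of_le_of_lt h3 h2)
        have : s.re = σ₀ + 2*ε := by rw [hεdef]; ring
        linarith [h4.1]
      have hnn : 0 ≤ f x * Real.log x ^ (n+1) :=
        mul_nonneg (hf_nonneg x) (pow_nonneg (Real.log_nonneg hx.le) _)
      rw [mul_assoc, mul_assoc]
      apply mul_le_mul_of_nonneg_left _ (hf_nonneg x)
      apply mul_le_mul_of_nonneg_left _ (pow_nonneg (Real.log_nonneg hx.le) _)
      exact Real.rpow_le_rpow_of_exponent_le hx.le (by linarith)
    · -- differentiability in u
      filter_upwards [ae_restrict_mem measurableSet_Ioi] with x hx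
      intro u _
      have hx0 : (0:ℝ) < x := lt_trans one_pos hx
      have hxne : (x:ℂ) ≠ 0 := by
        simpa using ne_of_gt hx0
      have hcpow : (fun u : ℂ => (x:ℂ)^(-u)) =
          fun u : ℂ => Complex.exp (Complex.log (x:ℂ) * (-u)) := by
        funext w
        exact Complex.cpow_def_of_ne_zero hxne _
      have hd : HasDerivAt (fun u : ℂ => (x:ℂ)^(-u)) (-(Complex.log (x:ℂ)) * (x:ℂ)^(-u)) u := by
        have h1 : HasDerivAt (fun u : ℂ => Complex.log (x:ℂ) * (-u))
            (Complex.log (x:ℂ) * (-1)) u := (hasDerivAt_id u).neg.const_mul (Complex.log (x:ℂ))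
        have h2 := h1.cexp
        rw [hcpow]
        refine h2.congr_deriv ?_
        rw [← Complex.cpow_def_of_ne_zero hxne]
        ring
      have h3 := hd.const_mul ((f x:ℂ) * (-Complex.ofReal (Real.log x))^n)
      refine h3.congr_deriv ?_
      rw [← Complex.ofReal_log hx0.le]
      ring
  -- iterated derivatives of Z
  have hUopen : IsOpen {s : ℂ | σ₀ < s.re} := isOpen_lt continuous_const Complex.continuous_re
  have hIter : ∀ (n : ℕ), ∀ s ∈ {s : ℂ | σ₀ < s.re}, iteratedDeriv n Z s
      = ∫ x in Ioi (1:ℝ), (f x:ℂ) * (-Complex.ofReal (Real.log x))^n * (x:ℂ)^(-s) := by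
    intro n
    induction n with
    | zero =>
      intro s hs
      rw [iteratedDeriv_zero, ← (hZint s hs).2]
      apply setIntegral_congr_fun measurableSet_Ioi
      intro x _
      simp
    | succ n ih =>
      intro s hs
      rw [iteratedDeriv_succ]
      have heq : iteratedDeriv n Z =ᶠ[nhds s]
          fun s => ∫ x in Ioi (1:ℝ), (f x:ℂ) * (-Complex.ofReal (Real.log x))^n * (x:ℂ)^(-s) :=
        Filter.eventuallyEq_of_mem (hUopen.mem_nhds hs) ih
      rw [heq.deriv_eq]
      exact (hZnderiv n s hs).deriv
  -- the Taylor series at a = σ₀ + 1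
  obtain ⟨a, hadef⟩ : ∃ a : ℝ, a = σ₀ + 1 := ⟨σ₀ + 1, rfl⟩
  have hσ₁a' : σ₁ < a := by rw [hadef]; exact hσ₁a
  have haU : ((a:ℝ):ℂ) ∈ {s : ℂ | σ₀ < s.re} := by simp [hadef]
  have hac : c < a := by rw [hadef]; linarith
  have hballsub : Metric.ball ((a:ℝ):ℂ) (a - c) ⊆ {s : ℂ | c < s.re} := by
    intro z hz
    rw [Metric.mem_ball, Complex.dist_eq] at hz
    have h1 : |(z - (a:ℂ)).re| ≤ ‖z - (a:ℂ)‖ := Complex.abs_re_le_norm _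
    have h2 : (z - ((a:ℝ):ℂ)).re = z.re - a := by simp
    rw [h2] at h1
    have := abs_lt.mp (lt_of_le_of_lt h1 hz)
    simpa using by linarith [this.1]
  have hmem : ((σ₁:ℝ):ℂ) ∈ Metric.ball ((a:ℝ):ℂ) (a - c) := by
    rw [Metric.mem_ball, Complex.dist_eq, ← Complex.ofReal_sub, Complex.norm_real, Real.norm_eq_abs,
      abs_of_nonpos (by linarith)]
    linarith
  have hsum := Complex.hasSum_taylorSeries_on_ball (hZd.mono hballsub) hmem
  -- identify the coefficients
  set M : ℕ → ℝ := fun n => ∫ x in Ioi (1:ℝ), f x * (Real.log x)^n * x ^ (-a) with hMdef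
  have hMnonneg : ∀ n, 0 ≤ M n := by
    intro n
    apply setIntegral_nonneg measurableSet_Ioi
    intro x hx
    have hx0 : (0:ℝ) < x := lt_trans one_pos hx
    exact mul_nonneg (mul_nonneg (hf_nonneg x) (pow_nonneg (Real.log_nonneg hx.le) n))
      (Real.rpow_nonneg hx0.le _)
  have hZnM : ∀ n : ℕ, (∫ x in Ioi (1:ℝ),
      (f x:ℂ) * (-Complex.ofReal (Real.log x))^n * (x:ℂ)^(-((a:ℝ):ℂ)))
      = ((((-1:ℝ))^n * M n : ℝ) : ℂ) := by
    intro n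
    have heq : ∀ x ∈ Ioi (1:ℝ), (f x:ℂ) * (-Complex.ofReal (Real.log x))^n * (x:ℂ)^(-((a:ℝ):ℂ))
        = ((((-1:ℝ))^n * (f x * (Real.log x)^n * x ^ (-a)) : ℝ) : ℂ) := by
      intro x hx
      have hx0 : (0:ℝ) < x := lt_trans one_pos hx
      rw [show -((a:ℝ):ℂ) = (((-a : ℝ)):ℂ) by push_cast; ring,
        ← Complex.ofReal_cpow hx0.le]
      push_cast
      ring
    rw [setIntegral_congr_fun measurableSet_Ioi heq]
    rw [show (fun x : ℝ => ((((-1:ℝ))^n * (f x * (Real.log x)^n * x ^ (-a)) : ℝ) : ℂ))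
        = fun x : ℝ => (RCLike.ofReal (K := ℂ) (((-1:ℝ))^n * (f x * (Real.log x)^n * x ^ (-a)))) from rfl]
    rw [integral_ofReal, MeasureTheory.integral_const_mul]
    norm_num
    rfl
  -- the real Taylor series
  set r : ℕ → ℝ := fun n => ((n.factorial : ℝ))⁻¹ * (a - σ₁)^n * M n with hrdef
  have hterm : (fun n : ℕ => ((n.factorial : ℂ))⁻¹ • (((σ₁:ℝ):ℂ) - ((a:ℝ):ℂ)) ^ n •
      iteratedDeriv n Z ((a:ℝ):ℂ)) = fun n => ((r n : ℝ) : ℂ) := by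
    funext n
    rw [hIter n _ haU, hZnM n, smul_eq_mul, smul_eq_mul, ← mul_assoc]
    have key : ((((σ₁:ℝ):ℂ)) - ((a:ℝ):ℂ))^n * ((((-1:ℝ))^n : ℝ):ℂ) = (((a - σ₁:ℝ)):ℂ)^n := by
      rw [Complex.ofReal_pow, ← mul_pow]
      congr 1
      push_cast
      ring
    calc ((n.factorial:ℂ))⁻¹ * ((((σ₁:ℝ):ℂ)) - ((a:ℝ):ℂ))^n * ((((-1:ℝ))^n * M n : ℝ):ℂ)
        = ((n.factorial:ℂ))⁻¹ * (((((σ₁:ℝ):ℂ)) - ((a:ℝ):ℂ))^n * ((((-1:ℝ))^n:ℝ):ℂ))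
            * ((M n : ℝ):ℂ) := by
          rw [Complex.ofReal_mul]; ring
      _ = ((n.factorial:ℂ))⁻¹ * (((a - σ₁:ℝ)):ℂ)^n * ((M n : ℝ):ℂ) := by rw [key]
      _ = ((r n : ℝ):ℂ) := by
          rw [hrdef]
          push_cast
          ring
  rw [hterm] at hsum
  have hr : HasSum r (Z ((σ₁:ℝ):ℂ)).re := by
    have := ((Complex.hasSum_iff _ _).mp hsum).1
    simpa using this
  have hrnonneg : ∀ n, 0 ≤ r n := by
    intro n
    apply mul_nonneg (mul_nonneg (by positivity) (pow_nonneg (by linarith) n)) (hMnonneg n)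
  -- conclude via Tonelli
  have hg_meas : AEStronglyMeasurable (fun x : ℝ => f x * x ^ (-σ₁))
      (volume.restrict (Ioi 1)) := by
    apply ContinuousOn.aestronglyMeasurable _ measurableSet_Ioi
    intro x hx
    have hx0 : (0:ℝ) < x := lt_trans one_pos hx
    exact ((hf_cont.continuousAt).mul
      (Real.continuousAt_rpow_const x (-σ₁) (Or.inl (ne_of_gt hx0)))).continuousWithinAt
  have hb : 0 < a - σ₁ := by linarith
  have hpt : ∀ x ∈ Ioi (1:ℝ), ENNReal.ofReal (f x * x ^ (-σ₁))
      = ∑' n : ℕ, ENNReal.ofReal (((n.factorial:ℝ))⁻¹ * (a - σ₁)^n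
          * (f x * (Real.log x)^n * x ^ (-a))) := by
    intro x hx
    have hx1 : (1:ℝ) ≤ x := le_of_lt hx
    have hx0 : (0:ℝ) < x := lt_trans one_pos hx
    have hexp : HasSum (fun n : ℕ => (Real.log x * (a - σ₁))^n / n.factorial)
        (x ^ (a - σ₁)) := by
      have h1 := NormedSpace.expSeries_div_hasSum_exp (Real.log x * (a - σ₁))
      rw [← Real.exp_eq_exp_ℝ] at h1
      rwa [Real.rpow_def_of_pos hx0]
    have hC : (0:ℝ) ≤ f x * x ^ (-a) := mul_nonneg (hf_nonneg x) (Real.rpow_nonneg hx0.le _)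
    have hsum2 := hexp.mul_left (f x * x ^ (-a))
    have hxs : f x * x ^ (-σ₁) = f x * x ^ (-a) * x ^ (a - σ₁) := by
      rw [mul_assoc, ← Real.rpow_add hx0]
      ring_nf
    rw [hxs, ← hsum2.tsum_eq, ENNReal.ofReal_tsum_of_nonneg ?nn ?sm]
    case nn =>
      intro n
      apply mul_nonneg hC
      apply div_nonneg (pow_nonneg (mul_nonneg (Real.log_nonneg hx1) hb.le) n)
        (Nat.cast_nonneg _)
    case sm => exact hsum2.summable
    apply tsum_congr
    intro n
    congr 1
    rw [div_eq_mul_inv, mul_pow]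
    ring
  have hgoal : ∫⁻ x in Ioi (1:ℝ), ENNReal.ofReal (f x * x ^ (-σ₁)) < ⊤ := by
    calc ∫⁻ x in Ioi (1:ℝ), ENNReal.ofReal (f x * x ^ (-σ₁))
        = ∫⁻ x in Ioi (1:ℝ), ∑' n : ℕ, ENNReal.ofReal (((n.factorial:ℝ))⁻¹ * (a - σ₁)^n
            * (f x * (Real.log x)^n * x ^ (-a))) :=
          setLIntegral_congr_fun measurableSet_Ioi hpt
      _ = ∑' n : ℕ, ∫⁻ x in Ioi (1:ℝ), ENNReal.ofReal (((n.factorial:ℝ))⁻¹ * (a - σ₁)^n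
            * (f x * (Real.log x)^n * x ^ (-a))) := by
          apply lintegral_tsum
          intro n
          exact ENNReal.measurable_ofReal.comp_aemeasurable
            ((hmeasn n a).aemeasurable.const_mul _)
      _ = ∑' n : ℕ, ENNReal.ofReal (r n) := by
          apply tsum_congr
          intro n
          have hint := (hIntLog n a (by rw [hadef]; linarith)).const_mul
            (((n.factorial:ℝ))⁻¹ * (a - σ₁)^n)
          rw [← ofReal_integral_eq_lintegral_ofReal hint ?nn2]
          case nn2 =>
            filter_upwards [ae_restrict_mem measurableSet_Ioi] with x hx
            have hx0 : (0:ℝ) < x := lt_trans one_pos hx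
            apply mul_nonneg (mul_nonneg (by positivity) (pow_nonneg hb.le n))
            exact mul_nonneg (mul_nonneg (hf_nonneg x)
              (pow_nonneg (Real.log_nonneg hx.le) n)) (Real.rpow_nonneg hx0.le _)
          congr 1
          rw [MeasureTheory.integral_const_mul]
      _ = ENNReal.ofReal ((Z ((σ₁:ℝ):ℂ)).re) := by
          rw [← ENNReal.ofReal_tsum_of_nonneg hrnonneg hr.summable, hr.tsum_eq]
      _ < ⊤ := ENNReal.ofReal_lt_top
  refine ⟨hg_meas, ?_⟩
  rw [hasFiniteIntegral_iff_ofReal ?pos]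
  case pos =>
    filter_upwards [ae_restrict_mem measurableSet_Ioi] with x hx
    have hx0 : (0:ℝ) < x := lt_trans one_pos hx
    exact mul_nonneg (hf_nonneg x) (Real.rpow_nonneg hx0.le _)
  exact hgoal

theorem stmt1 (k : ℕ) (hk : 1 ≤ k) (c : ℝ) (hc : 1 ≤ c)
    (h : ∃ (σ₀ : ℝ) (Z : ℂ → ℂ), c ≤ σ₀ ∧
      DifferentiableOn ℂ Z {s : ℂ | c < s.re} ∧
      (∀ s : ℂ, σ₀ < s.re →
        IntegrableOn (fun x : ℝ => (zetaPow k x : ℂ) * (x:ℂ) ^ (-s)) (Ioi (1:ℝ)) ∧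
        (∫ x in Ioi (1:ℝ), (zetaPow k x : ℂ) * (x:ℂ) ^ (-s)) = Z s) ∧
      (∀ ε > (0:ℝ), ∃ C : ℝ, ∀ t : ℝ, ‖Z (((c + ε : ℝ) : ℂ) + t * Complex.I)‖ ≤ C)) :
    ∀ ε > (0:ℝ), ∃ C : ℝ, ∀ T ≥ (1:ℝ),
      (∫ t in (0:ℝ)..T, zetaPow k t) ≤ C * T ^ (c + ε) := by
  obtain ⟨σ₀, Z, hcσ, hZd, hZint, _⟩ := h
  intro ε hε
  set σ₁ := min (c + ε) ((c + (σ₀ + 1))/2) with hσ₁def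
  have h1 : c < σ₁ := lt_min (by linarith) (by linarith)
  have h2 : σ₁ < σ₀ + 1 := lt_of_le_of_lt (min_le_right _ _) (by linarith)
  have h3 : σ₁ ≤ c + ε := min_le_left _ _
  have hσ₁pos : 0 < σ₁ := by linarith
  have hAint : IntegrableOn (fun x => zetaPow k x * x ^ (-σ₁)) (Ioi (1:ℝ)) :=
    landau (zetaPow_continuous k) (zetaPow_nonneg k) (by linarith) hcσ hZd hZint h1 h2
  set A := ∫ x in Ioi (1:ℝ), zetaPow k x * x ^ (-σ₁) with hAdef
  have hA0 : 0 ≤ A := setIntegral_nonneg measurableSet_Ioi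
    (fun x hx => mul_nonneg (zetaPow_nonneg k x)
      (Real.rpow_nonneg (le_of_lt (lt_trans one_pos hx)) _))
  set B := ∫ t in (0:ℝ)..(1:ℝ), zetaPow k t with hBdef
  have hB0 : 0 ≤ B :=
    intervalIntegral.integral_nonneg (by norm_num) (fun x _ => zetaPow_nonneg k x)
  refine ⟨A + B, ?_⟩
  intro T hT
  have hTpos : (0:ℝ) < T := by linarith
  have hint01 : IntervalIntegrable (zetaPow k) volume 0 1 :=
    (zetaPow_continuous k).intervalIntegrable _ _
  have hint1T : IntervalIntegrable (zetaPow k) volume 1 T :=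
    (zetaPow_continuous k).intervalIntegrable _ _
  have hsplit : ∫ t in (0:ℝ)..T, zetaPow k t = B + ∫ t in (1:ℝ)..T, zetaPow k t :=
    (intervalIntegral.integral_add_adjacent_intervals hint01 hint1T).symm
  have hmid : ∫ t in (1:ℝ)..T, zetaPow k t ≤ A * T ^ σ₁ := by
    rw [intervalIntegral.integral_of_le hT]
    calc ∫ x in Ioc (1:ℝ) T, zetaPow k x
        ≤ ∫ x in Ioc (1:ℝ) T, (zetaPow k x * x ^ (-σ₁)) * T ^ σ₁ := by
          apply setIntegral_mono_on ((zetaPow_continuous k).integrableOn_Ioc)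
            ((hAint.mono_set Ioc_subset_Ioi_self).mul_const _) measurableSet_Ioc
          intro x hx
          have hx0 : (0:ℝ) < x := lt_trans one_pos hx.1
          have hxx : x ^ (-σ₁) * x ^ σ₁ = 1 := by
            rw [← Real.rpow_add hx0]; simp
          calc zetaPow k x = (zetaPow k x * x ^ (-σ₁)) * x ^ σ₁ := by
                rw [mul_assoc, hxx, mul_one]
            _ ≤ (zetaPow k x * x ^ (-σ₁)) * T ^ σ₁ := by
                apply mul_le_mul_of_nonneg_left (Real.rpow_le_rpow hx0.le hx.2 hσ₁pos.le)
                exact mul_nonneg (zetaPow_nonneg k x) (Real.rpow_nonneg hx0.le _)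
      _ = (∫ x in Ioc (1:ℝ) T, zetaPow k x * x ^ (-σ₁)) * T ^ σ₁ :=
          MeasureTheory.integral_mul_const _ _
      _ ≤ A * T ^ σ₁ := by
          apply mul_le_mul_of_nonneg_right _ (Real.rpow_nonneg hTpos.le _)
          apply setIntegral_mono_set hAint ?nn (HasSubset.Subset.eventuallyLE Ioc_subset_Ioi_self)
          case nn =>
            filter_upwards [ae_restrict_mem measurableSet_Ioi] with x hx
            exact mul_nonneg (zetaPow_nonneg k x)
              (Real.rpow_nonneg (le_of_lt (lt_trans one_pos hx)) _)
  have hT1 : (1:ℝ) ≤ T ^ σ₁ := Real.one_le_rpow hT hσ₁pos.le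
  have hTle : T ^ σ₁ ≤ T ^ (c + ε) := Real.rpow_le_rpow_of_exponent_le hT h3
  have hTce : (1:ℝ) ≤ T ^ (c + ε) := le_trans hT1 hTle
  rw [hsplit]
  calc B + ∫ t in (1:ℝ)..T, zetaPow k t ≤ B + A * T ^ σ₁ := by linarith [hmid]
    _ ≤ B * T ^ (c + ε) + A * T ^ (c + ε) := by nlinarith [hB0, hTce, hA0, hTle]
    _ = (A + B) * T ^ (c + ε) := by ring
end

section
/- Let k ≥ 1 be an integer and let s ∈ ℂ with σ = Re s be such that ∫₁^∞ |ζ(1/2+ix)|^{2k} x^{-σ} dx < ∞. Then Z_k(s)² = 2 ∫₁^∞ x^{-s} ( ∫_{√x}^{x} |ζ(1/2+iu)|^{2k} · |ζ(1/2+i(x/u))|^{2k} du/u ) dx, where both sides converge absolutely. -/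
open MeasureTheory Set Complex Filter

/-- The modified Mellin transform `Z_k(s) = ∫₁^∞ |ζ(1/2+ix)|^{2k} x^{-s} dx`. -/
noncomputable def modMellin (k : ℕ) (s : ℂ) : ℂ :=
  ∫ x in Ioi (1:ℝ), (zetaPow k x : ℂ) * (x:ℂ) ^ (-s)

lemma measurable_ofReal_cpow (c : ℂ) : Measurable fun x : ℝ => (x:ℂ) ^ c := by
  have h : (fun x : ℝ => (x:ℂ)^c)
      = (fun x : ℝ => if (x:ℂ) = 0 then (if c = 0 then 1 else 0)
          else Complex.exp (Complex.log (x:ℂ) * c)) := by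
    funext x; rw [Complex.cpow_def]
  rw [h]
  exact Measurable.ite (Complex.measurable_ofReal (measurableSet_singleton 0)) measurable_const
    ((Complex.measurable_log.comp Complex.measurable_ofReal).mul_const c).cexp

lemma img_mul (u : ℝ) (hu : 0 < u) : (fun v => u*v) '' Ioi (1:ℝ) = Ioi u := by
  ext y; constructor
  · rintro ⟨v, hv, rfl⟩
    simpa using (mul_lt_mul_of_pos_left hv hu)
  · intro hy
    exact ⟨y/u, by rw [mem_Ioi, lt_div_iff₀ hu]; simpa using hy, by field_simp⟩

lemma der_mul (u : ℝ) : ∀ v ∈ Ioi (1:ℝ), HasDerivWithinAt (fun v => u*v) u (Ioi 1) v := by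
  intro v _
  simpa using ((hasDerivAt_id v).const_mul u).hasDerivWithinAt

lemma scale_integral {E : Type*} [NormedAddCommGroup E] [NormedSpace ℝ E]
    (g : ℝ → E) {u : ℝ} (hu : 0 < u) :
    ∫ x in Ioi u, g (x/u) = u • ∫ v in Ioi 1, g v := by
  have hinj : InjOn (fun v => u*v) (Ioi 1) := fun a _ b _ h => mul_left_cancel₀ hu.ne' h
  rw [← img_mul u hu, integral_image_eq_integral_abs_deriv_smul measurableSet_Ioi (der_mul u) hinj]
  rw [← integral_smul]
  congr 1; funext v
  rw [mul_div_cancel_left₀ _ hu.ne', abs_of_pos hu]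

lemma scale_integrable {E : Type*} [NormedAddCommGroup E] [NormedSpace ℝ E]
    (g : ℝ → E) {u : ℝ} (hu : 0 < u) :
    IntegrableOn (fun x => g (x/u)) (Ioi u) ↔ IntegrableOn g (Ioi 1) := by
  have hinj : InjOn (fun v => u*v) (Ioi 1) := fun a _ b _ h => mul_left_cancel₀ hu.ne' h
  rw [← img_mul u hu,
    integrableOn_image_iff_integrableOn_abs_deriv_smul measurableSet_Ioi (der_mul u) hinj]
  have h : (fun v => |u| • g (u*v/u)) = fun v => |u| • g v := by
    funext v; rw [mul_div_cancel_left₀ _ hu.ne']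
  rw [h]
  exact integrable_smul_iff (c := |u|) (abs_ne_zero.2 hu.ne') g

lemma symm_half (k : ℕ) {x : ℝ} (hx : 1 < x) :
    ∫ u in Ioc (1:ℝ) x, zetaPow k u * zetaPow k (x/u) * u⁻¹
      = 2 * ∫ u in Ioc (Real.sqrt x) x, zetaPow k u * zetaPow k (x/u) * u⁻¹ := by
  set f := zetaPow k with hf
  set h : ℝ → ℝ := fun u => f u * f (x/u) * u⁻¹ with hdef
  have hx0 : (0:ℝ) < x := lt_trans one_pos hx
  set r := Real.sqrt x with hrdef
  have hr1 : 1 < r := by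
    rw [hrdef, show (1:ℝ) = Real.sqrt 1 by simp]
    exact Real.sqrt_lt_sqrt (by norm_num) hx
  have hrx : r < x := by nlinarith [Real.mul_self_sqrt hx0.le, (show 1 < Real.sqrt x by
    rw [show (1:ℝ) = Real.sqrt 1 by simp]; exact Real.sqrt_lt_sqrt (by norm_num) hx)]
  have hrr : r * r = x := Real.mul_self_sqrt hx0.le
  have hr0 : 0 < r := lt_trans one_pos hr1
  -- continuity and integrability
  have hc : ContinuousOn h (Icc 1 x) := by
    have h0 : ∀ u ∈ Icc (1:ℝ) x, u ≠ 0 := fun u hu => by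
      have := hu.1; positivity
    refine ContinuousOn.mul (ContinuousOn.mul ((zetaPow_continuous k).continuousOn) ?_) ?_
    · exact (zetaPow_continuous k).comp_continuousOn (continuousOn_const.div continuousOn_id h0)
    · exact continuousOn_id.inv₀ h0
  have hint : IntegrableOn h (Ioc 1 x) := (hc.integrableOn_Icc).mono_set Ioc_subset_Icc_self
  -- change of variables on Ioo 1 r
  have himg : (fun u => x/u) '' Ioo (1:ℝ) r = Ioo r x := by
    ext y; constructor
    · rintro ⟨u, hu, rfl⟩
      have hu0 : 0 < u := lt_trans one_pos hu.1
      constructor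
      · calc r = x / r := by rw [eq_div_iff hr0.ne', hrr]
          _ < x / u := by apply div_lt_div_of_pos_left hx0 hu0 hu.2
      · calc x / u < x / 1 := by apply div_lt_div_of_pos_left hx0 one_pos hu.1
          _ = x := by simp
    · intro hy
      have hy0 : 0 < y := lt_trans hr0 hy.1
      refine ⟨x/y, ⟨?_, ?_⟩, ?_⟩
      · rw [lt_div_iff₀ hy0]; simpa using hy.2
      · rw [div_lt_iff₀ hy0, ← hrr]
        exact mul_lt_mul_of_pos_left hy.1 hr0
      · field_simp
  have hder : ∀ u ∈ Ioo (1:ℝ) r, HasDerivWithinAt (fun u => x/u) (-(x/u^2)) (Ioo 1 r) u := by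
    intro u hu
    have hu0 : u ≠ 0 := (lt_trans one_pos hu.1).ne'
    have := ((hasDerivAt_inv hu0).const_mul x).hasDerivWithinAt (s := Ioo (1:ℝ) r)
    simpa [div_eq_mul_inv, mul_neg] using this
  have hinj : InjOn (fun u => x/u) (Ioo 1 r) := by
    intro a ha b hb hab
    have ha0 : a ≠ 0 := (lt_trans one_pos ha.1).ne'
    have hb0 : b ≠ 0 := (lt_trans one_pos hb.1).ne'
    have h2 : x * b = x * a := by
      rw [div_eq_div_iff ha0 hb0] at hab; linarith
    exact (mul_left_cancel₀ hx0.ne' h2).symm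
  have key : ∫ u in Ioo r x, h u = ∫ u in Ioo (1:ℝ) r, h u := by
    rw [← himg, integral_image_eq_integral_abs_deriv_smul measurableSet_Ioo hder hinj]
    refine setIntegral_congr_fun measurableSet_Ioo ?_
    intro u hu
    have hu0 : 0 < u := lt_trans one_pos hu.1
    have hxu : x / (x / u) = u := by field_simp
    have hu0' : u ≠ 0 := hu0.ne'
    have hx0' : x ≠ 0 := hx0.ne'
    have habs : |(-(x/u^2))| = x/u^2 := by
      rw [abs_neg]; exact abs_of_nonneg (by positivity)
    rw [hdef]
    simp only [smul_eq_mul, hxu, habs]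
    field_simp
  -- split
  have hsplit : Ioc (1:ℝ) x = Ioc 1 r ∪ Ioc r x := (Ioc_union_Ioc_eq_Ioc hr1.le hrx.le).symm
  rw [hsplit, setIntegral_union (Ioc_disjoint_Ioc_of_le le_rfl) measurableSet_Ioc
    (hint.mono_set (by rw [hsplit]; exact subset_union_left))
    (hint.mono_set (by rw [hsplit]; exact subset_union_right))]
  rw [integral_Ioc_eq_integral_Ioo (f := h), key.symm, ← integral_Ioc_eq_integral_Ioo]
  ring

lemma integral_ofReal' {μ : MeasureTheory.Measure ℝ} (g : ℝ → ℝ) :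
    ∫ x, ((g x : ℝ) : ℂ) ∂μ = ((∫ x, g x ∂μ : ℝ) : ℂ) :=
  integral_ofReal

theorem stmt5 (k : ℕ) (hk : 1 ≤ k) (s : ℂ)
    (habs : IntegrableOn (fun x : ℝ => zetaPow k x * x ^ (-s.re)) (Ioi (1:ℝ))) :
    IntegrableOn
      (fun x : ℝ => (x:ℂ) ^ (-s) *
        ∫ u in Real.sqrt x..x, (zetaPow k u : ℂ) * (zetaPow k (x / u) : ℂ) * (u:ℂ)⁻¹)
      (Ioi (1:ℝ)) ∧
    (modMellin k s) ^ 2 =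
      2 * ∫ x in Ioi (1:ℝ), (x:ℂ) ^ (-s) *
        ∫ u in Real.sqrt x..x, (zetaPow k u : ℂ) * (zetaPow k (x / u) : ℂ) * (u:ℂ)⁻¹ := by
  have hfc : Continuous (zetaPow k) := zetaPow_continuous k
  have hf0 : ∀ x, 0 ≤ zetaPow k x := zetaPow_nonneg k
  set f := zetaPow k with hfdef
  set σ := s.re with hσ
  set F : ℝ → ℂ := fun x => (f x : ℂ) * (x:ℂ) ^ (-s) with hFdef
  set Fr : ℝ → ℝ := fun x => f x * x ^ (-σ) with hFrdef
  have hFmeas : Measurable F :=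
    (Complex.measurable_ofReal.comp hfc.measurable).mul (measurable_ofReal_cpow (-s))
  have hnorm : ∀ x : ℝ, 0 < x → ‖F x‖ = Fr x := by
    intro x hx
    rw [hFdef]
    simp only [norm_mul, Complex.norm_real, Real.norm_eq_abs, _root_.abs_of_nonneg (hf0 x)]
    rw [Complex.norm_cpow_eq_rpow_re_of_pos hx, Complex.neg_re]
  have hFr_int : IntegrableOn Fr (Ioi 1) := habs
  have hF_int : IntegrableOn F (Ioi 1) := by
    refine Integrable.mono' hFr_int hFmeas.aestronglyMeasurable.restrict ?_
    filter_upwards [ae_restrict_mem measurableSet_Ioi] with x hx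
    exact (hnorm x (lt_trans one_pos hx)).le
  set Z := modMellin k s with hZdef
  have hZ : Z = ∫ x in Ioi 1, F x := rfl
  set A := ∫ x in Ioi (1:ℝ), Fr x with hAdef
  -- the product function
  set G : ℝ × ℝ → ℂ :=
    fun p => (f p.1 : ℂ) * (f (p.2/p.1) : ℂ) * (p.2:ℂ) ^ (-s) * ((p.1:ℂ))⁻¹ with hGdef
  set S : Set (ℝ × ℝ) := {p | 1 < p.1 ∧ p.1 < p.2} with hSdef
  have hSm : MeasurableSet S := by
    have : S = {p : ℝ × ℝ | 1 < p.1} ∩ {p : ℝ × ℝ | p.1 < p.2} := rfl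
    rw [this]
    exact (measurableSet_lt measurable_const measurable_fst).inter
      (measurableSet_lt measurable_fst measurable_snd)
  have hGmeas : Measurable G :=
    (((Complex.measurable_ofReal.comp (hfc.measurable.comp measurable_fst)).mul
      (Complex.measurable_ofReal.comp (hfc.measurable.comp (measurable_snd.div measurable_fst)))).mul
      ((measurable_ofReal_cpow (-s)).comp measurable_snd)).mul
      (Complex.measurable_ofReal.comp measurable_fst).inv
  set H : ℝ × ℝ → ℂ := S.indicator G with hHdef
  have hHmeas : AEStronglyMeasurable H (volume.prod volume) :=
    ((hGmeas.indicator hSm).stronglyMeasurable).aestronglyMeasurable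
  -- sections in u
  have hcurry : ∀ u : ℝ, 1 < u → (fun x => H (u, x)) = (Ioi u).indicator (fun x => G (u, x)) := by
    intro u hu
    funext x
    by_cases hx : u < x
    · rw [indicator_of_mem (show x ∈ Ioi u from hx), hHdef, indicator_of_mem (show (u,x) ∈ S from ⟨hu, hx⟩)]
    · rw [indicator_of_notMem (show x ∉ Ioi u from hx), hHdef,
        indicator_of_notMem (show (u,x) ∉ S from fun h => hx h.2)]
  have hcurry0 : ∀ u : ℝ, u ≤ 1 → (fun x => H (u, x)) = 0 := by
    intro u hu
    funext x
    rw [hHdef, indicator_of_notMem (show (u,x) ∉ S from fun h => absurd h.1 (not_lt.2 hu))]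
    rfl
  -- G section equals scaled F
  have hGeq : ∀ u : ℝ, 1 < u → EqOn (fun x => G (u, x))
      (fun x => ((f u : ℂ) * (u:ℂ)^(-s) * (u:ℂ)⁻¹) * F (x/u)) (Ioi u) := by
    intro u hu x hx
    have hu0 : (0:ℝ) < u := lt_trans one_pos hu
    have hx0 : (0:ℝ) < x := lt_trans hu0 hx
    have hxu : u * (x/u) = x := by field_simp
    have hsplit : (x:ℂ)^(-s) = (u:ℂ)^(-s) * ((x/u : ℝ):ℂ)^(-s) := by
      rw [show ((x:ℝ):ℂ) = (((u * (x/u) : ℝ)):ℂ) by rw [hxu], Complex.ofReal_mul]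
      exact mul_cpow_ofReal_nonneg hu0.le (div_nonneg hx0.le hu0.le) (-s)
    simp only [hGdef, hFdef]
    rw [hsplit]
    ring
  -- integrability of sections
  have hIu : ∀ u : ℝ, 1 < u → Integrable (fun x => H (u, x)) := by
    intro u hu
    have hu0 : (0:ℝ) < u := lt_trans one_pos hu
    rw [hcurry u hu, integrable_indicator_iff measurableSet_Ioi]
    have h1 : IntegrableOn (fun x => F (x/u)) (Ioi u) := (scale_integrable F hu0).2 hF_int
    exact MeasureTheory.IntegrableOn.congr_fun (h1.const_mul _) (fun x hx => (hGeq u hu hx).symm) measurableSet_Ioi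
  -- norm of G sections
  have hGnorm : ∀ u : ℝ, 1 < u → ∀ x ∈ Ioi u,
      ‖G (u, x)‖ = (f u * u ^ (-σ) * u⁻¹) * Fr (x/u) := by
    intro u hu x hx
    have hu0 : (0:ℝ) < u := lt_trans one_pos hu
    have hx0 : (0:ℝ) < x := lt_trans hu0 hx
    have h1 := hGeq u hu hx
    simp only [] at h1
    rw [h1, norm_mul, hnorm (x/u) (div_pos hx0 hu0)]
    congr 1
    rw [norm_mul, norm_mul, norm_inv, Complex.norm_real, Complex.norm_real, Real.norm_eq_abs,
      Real.norm_eq_abs, _root_.abs_of_nonneg (hf0 u), _root_.abs_of_pos hu0,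
      Complex.norm_cpow_eq_rpow_re_of_pos hu0, Complex.neg_re]
  -- integral of norms of sections
  have hnormfun : (fun u => ∫ x, ‖H (u, x)‖) = (Ioi 1).indicator (fun u => (u * A) * (f u * u ^ (-σ) * u⁻¹)) := by
    funext u
    by_cases hu : 1 < u
    · have hu0 : (0:ℝ) < u := lt_trans one_pos hu
      rw [indicator_of_mem (show u ∈ Ioi 1 from hu)]
      have h3 : (fun x => ‖H (u, x)‖) = (Ioi u).indicator (fun x => ‖G (u, x)‖) := by
        funext x
        rw [congrFun (hcurry u hu) x, norm_indicator_eq_indicator_norm]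
      rw [h3, integral_indicator measurableSet_Ioi,
        setIntegral_congr_fun measurableSet_Ioi (hGnorm u hu), integral_const_mul,
        scale_integral Fr hu0, smul_eq_mul, ← hAdef]
      ring
    · rw [indicator_of_notMem (show u ∉ Ioi 1 from hu)]
      have h4 : ∀ x, H (u, x) = 0 := congrFun (hcurry0 u (not_lt.1 hu))
      simp [h4]
  have hnorm_int : Integrable (fun u => ∫ x, ‖H (u, x)‖) := by
    rw [hnormfun, integrable_indicator_iff measurableSet_Ioi]
    have : EqOn (fun u : ℝ => A * (f u * u ^ (-σ))) (fun u => (u * A) * (f u * u ^ (-σ) * u⁻¹)) (Ioi 1) := by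
      intro u hu
      have hu0 : u ≠ 0 := (lt_trans one_pos hu).ne'
      field_simp
    exact MeasureTheory.IntegrableOn.congr_fun (hFr_int.const_mul A) this measurableSet_Ioi
  have hH_int : Integrable H (volume.prod volume) := by
    refine (integrable_prod_iff hHmeas).2 ⟨ae_of_all _ fun u => ?_, hnorm_int⟩
    by_cases hu : 1 < u
    · exact hIu u hu
    · rw [hcurry0 u (not_lt.1 hu)]
      exact integrable_zero _ _ _
  -- value of sections
  have hval_u : ∀ u : ℝ, 1 < u → ∫ x, H (u, x) = F u * Z := by
    intro u hu
    have hu0 : (0:ℝ) < u := lt_trans one_pos hu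
    have huC : ((u:ℝ):ℂ) ≠ 0 := Complex.ofReal_ne_zero.2 hu0.ne'
    rw [hcurry u hu, integral_indicator measurableSet_Ioi,
      setIntegral_congr_fun measurableSet_Ioi (hGeq u hu), integral_const_mul,
      scale_integral F hu0, ← hZ]
    rw [Complex.real_smul]
    rw [hFdef]
    field_simp
  -- first iterated integral = Z^2
  have hiter1 : ∫ p, H p ∂(volume.prod volume) = Z^2 := by
    rw [integral_prod _ hH_int]
    have : (fun u => ∫ x, H (u, x)) = (Ioi 1).indicator (fun u => F u * Z) := by
      funext u
      by_cases hu : 1 < u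
      · rw [indicator_of_mem (show u ∈ Ioi 1 from hu), hval_u u hu]
      · rw [indicator_of_notMem (show u ∉ Ioi 1 from hu), hcurry0 u (not_lt.1 hu)]
        simp
    rw [this, integral_indicator measurableSet_Ioi, integral_mul_const, ← hZ, sq]
  -- sections in x
  have hcurry_x : ∀ x : ℝ, (fun u => H (u, x)) = (Ioo 1 x).indicator (fun u => G (u, x)) := by
    intro x
    funext u
    by_cases hu : u ∈ Ioo 1 x
    · rw [indicator_of_mem hu, hHdef, indicator_of_mem (show (u,x) ∈ S from ⟨hu.1, hu.2⟩)]
    · rw [indicator_of_notMem (show u ∉ Ioo 1 x from hu), hHdef,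
        indicator_of_notMem (show (u,x) ∉ S from fun h => hu ⟨h.1, h.2⟩)]
  set Φ : ℝ → ℂ := fun x => ∫ u, H (u, x) with hΦdef
  have hΦint : Integrable Φ := hH_int.integral_prod_right
  have hΦ0 : ∀ x : ℝ, x ≤ 1 → Φ x = 0 := by
    intro x hx
    show (∫ u, H (u, x)) = 0
    rw [hcurry_x x, Ioo_eq_empty (not_lt.2 hx)]
    simp
  have hΦval : ∀ x : ℝ, 1 < x → Φ x =
      2 * ((x:ℂ)^(-s) * ∫ u in Real.sqrt x..x, (f u : ℂ) * (f (x/u) : ℂ) * (u:ℂ)⁻¹) := by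
    intro x hx
    have hx0 : (0:ℝ) < x := lt_trans one_pos hx
    have hr : Real.sqrt x ≤ x := by
      nlinarith [Real.mul_self_sqrt hx0.le, Real.sqrt_nonneg x]
    have hpt : ∀ u : ℝ, G (u, x) = (x:ℂ)^(-s) * ((f u * f (x/u) * u⁻¹ : ℝ) : ℂ) := by
      intro u; rw [hGdef]; push_cast; ring
    have hco : (fun u : ℝ => (f u : ℂ) * (f (x/u) : ℂ) * (u:ℂ)⁻¹)
        = fun u : ℝ => ((f u * f (x/u) * u⁻¹ : ℝ) : ℂ) := by
      funext u; push_cast; ring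
    have hiv : (∫ u in Real.sqrt x..x, (f u : ℂ) * (f (x/u) : ℂ) * (u:ℂ)⁻¹)
        = ((∫ u in Ioc (Real.sqrt x) x, f u * f (x/u) * u⁻¹ : ℝ) : ℂ) := by
      rw [intervalIntegral.integral_of_le hr, hco, integral_ofReal' _]
    calc Φ x = ∫ u, (Ioo 1 x).indicator (fun u => G (u, x)) u := by
          show (∫ u, H (u, x)) = _
          rw [hcurry_x x]
      _ = ∫ u in Ioo 1 x, G (u, x) := integral_indicator measurableSet_Ioo
      _ = ∫ u in Ioo 1 x, (x:ℂ)^(-s) * ((f u * f (x/u) * u⁻¹ : ℝ) : ℂ) :=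
          setIntegral_congr_fun measurableSet_Ioo (fun u _ => hpt u)
      _ = (x:ℂ)^(-s) * ((∫ u in Ioo 1 x, f u * f (x/u) * u⁻¹ : ℝ) : ℂ) := by
          rw [integral_const_mul, integral_ofReal' _]
      _ = (x:ℂ)^(-s) * ((2 * ∫ u in Ioc (Real.sqrt x) x, f u * f (x/u) * u⁻¹ : ℝ) : ℂ) := by
          rw [← integral_Ioc_eq_integral_Ioo, hfdef, symm_half k hx]
      _ = 2 * ((x:ℂ)^(-s) * ∫ u in Real.sqrt x..x, (f u : ℂ) * (f (x/u) : ℂ) * (u:ℂ)⁻¹) := by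
          rw [hiv]; push_cast; ring
  constructor
  · have h2 : IntegrableOn (fun x => (2⁻¹:ℂ) * Φ x) (Ioi 1) := (hΦint.const_mul _).integrableOn
    refine h2.congr_fun ?_ measurableSet_Ioi
    intro x hx
    dsimp only []
    rw [hΦval x hx, ← mul_assoc, inv_mul_cancel₀ (two_ne_zero), one_mul]
  · have e1 : Z^2 = ∫ x, Φ x := by
      rw [← hiter1, integral_prod_symm _ hH_int]
    calc Z^2 = ∫ x, Φ x := e1
      _ = ∫ x in Ioi (1:ℝ), Φ x :=
          (setIntegral_eq_integral_of_forall_compl_eq_zero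
            (fun x hx => hΦ0 x (not_lt.1 (by simpa using hx)))).symm
      _ = ∫ x in Ioi (1:ℝ), 2 * ((x:ℂ)^(-s) * ∫ u in Real.sqrt x..x,
            (f u : ℂ) * (f (x/u) : ℂ) * (u:ℂ)⁻¹) :=
          setIntegral_congr_fun measurableSet_Ioi (fun x hx => hΦval x hx)
      _ = 2 * ∫ x in Ioi (1:ℝ), (x:ℂ)^(-s) * ∫ u in Real.sqrt x..x,
            (f u : ℂ) * (f (x/u) : ℂ) * (u:ℂ)⁻¹ := integral_const_mul 2 _
end

section
/- Let 0 < a < b be real numbers, let f : [a,b] → ℂ be integrable, and let s ∈ ℂ. Then ( ∫_a^b f(x) x^{-s} dx )² = 2 ∫_{a²}^{b²} x^{-s} ( ∫_{√x}^{min(x/a, b)} f(u) · f(x/u) du/u ) dx. -/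
open MeasureTheory Set Complex Filter

namespace Stmt6Helpers

lemma img_div {x c d : ℝ} (hx : 0 < x) (hc : 0 < c) (hcd : c ≤ d) :
    (fun t => x / t) '' Icc c d = Icc (x / d) (x / c) := by
  have hd : 0 < d := hc.trans_le hcd
  ext y
  constructor
  · rintro ⟨t, ⟨h1, h2⟩, rfl⟩
    have ht : 0 < t := hc.trans_le h1
    constructor
    · rw [div_le_div_iff₀ hd (hc.trans_le h1)]; nlinarith
    · rw [div_le_div_iff₀ (hc.trans_le h1) hc]; nlinarith
  · rintro ⟨h1, h2⟩
    have hy0 : 0 < y := lt_of_lt_of_le (div_pos hx hd) h1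
    refine ⟨x / y, ⟨?_, ?_⟩, div_div_cancel₀ ?_⟩
    · rw [le_div_iff₀ hy0]
      rw [le_div_iff₀ hc] at h2
      linarith [h2]
    · rw [div_le_iff₀ hy0]
      rw [div_le_iff₀ hd] at h1
      linarith [h1]
    · exact hx.ne'

lemma inj_div {x c d : ℝ} (hx : 0 < x) (hc : 0 < c) :
    InjOn (fun t => x / t) (Icc c d) := by
  intro t1 h1 t2 h2 he
  have ht1 : t1 ≠ 0 := (hc.trans_le h1.1).ne'
  have ht2 : t2 ≠ 0 := (hc.trans_le h2.1).ne'
  field_simp at he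
  exact he.symm

lemma deriv_div {x c d : ℝ} (hc : 0 < c) :
    ∀ u ∈ Icc c d, HasDerivWithinAt (fun t => x / t) (-(x / u ^ 2)) (Icc c d) u := by
  intro u hu
  have hu0 : u ≠ 0 := (hc.trans_le hu.1).ne'
  have h : HasDerivAt (fun t : ℝ => x / t) (-(x / u ^ 2)) u := by
    simpa [div_eq_mul_inv, neg_div, mul_comm, mul_div_assoc] using
      ((hasDerivAt_inv hu0).const_mul x)
  exact h.hasDerivWithinAt

/-- change of variables `u ↦ x / u` for the symmetric integrand -/
lemma symm_cov (f : ℝ → ℂ) {x c d : ℝ} (hx : 0 < x) (hc : 0 < c) (hcd : c ≤ d) :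
    ∫ u in Icc (x / d) (x / c), f u * f (x / u) * (u : ℂ)⁻¹
      = ∫ u in Icc c d, f u * f (x / u) * (u : ℂ)⁻¹ := by
  rw [← img_div hx hc hcd,
    integral_image_eq_integral_abs_deriv_smul measurableSet_Icc (deriv_div hc)
      (inj_div hx hc)]
  refine setIntegral_congr_fun measurableSet_Icc fun u hu => ?_
  have hu0 : (0:ℝ) < u := hc.trans_le hu.1
  have hxx : x / (x / u) = u := div_div_cancel₀ hx.ne'
  rw [hxx, abs_neg, abs_of_pos (by positivity : (0:ℝ) < x / u ^ 2), real_smul]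
  have hu0' : (u:ℂ) ≠ 0 := by exact_mod_cast hu0.ne'
  have hx0' : (x:ℂ) ≠ 0 := by exact_mod_cast hx.ne'
  push_cast
  field_simp

lemma ae_div_nmem {x : ℝ} (hx : 0 < x) {N : Set ℝ} (hN : volume N = 0) :
    ∀ᵐ u : ℝ, 0 < u → x / u ∉ N := by
  have hdiff : DifferentiableOn ℝ (fun t : ℝ => x / t) (N ∩ Ioi 0) := by
    intro t ht
    exact ((differentiableAt_const x).div differentiableAt_id (ne_of_gt ht.2)).differentiableWithinAt
  have h1 : volume ((fun t : ℝ => x / t) '' (N ∩ Ioi 0)) = 0 :=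
    addHaar_image_eq_zero_of_differentiableOn_of_addHaar_eq_zero volume hdiff
      (measure_mono_null inter_subset_left hN)
  have h2 : {u : ℝ | 0 < u ∧ x / u ∈ N} ⊆ (fun t : ℝ => x / t) '' (N ∩ Ioi 0) := by
    rintro u ⟨hu, hmem⟩
    exact ⟨x / u, ⟨hmem, div_pos hx hu⟩, div_div_cancel₀ hx.ne'⟩
  have h3 : volume {u : ℝ | 0 < u ∧ x / u ∈ N} = 0 := measure_mono_null h2 h1
  rw [ae_iff]
  refine measure_mono_null ?_ h3
  intro u hu
  simp only [mem_setOf_eq] at hu ⊢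
  tauto

lemma rpow_le_max {p q x : ℝ} (t : ℝ) (hp : 0 < p) (hpx : p ≤ x) (hxq : x ≤ q) :
    x ^ t ≤ max (p ^ t) (q ^ t) := by
  have hx0 : 0 < x := hp.trans_le hpx
  rcases le_or_gt 0 t with ht | ht
  · exact le_max_of_le_right (Real.rpow_le_rpow hx0.le hxq ht)
  · refine le_max_of_le_left ?_
    have h1 : x ^ t = (x⁻¹) ^ (-t) := by
      rw [Real.inv_rpow hx0.le, Real.rpow_neg hx0.le, inv_inv]
    have h2 : p ^ t = (p⁻¹) ^ (-t) := by
      rw [Real.inv_rpow hp.le, Real.rpow_neg hp.le, inv_inv]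
    rw [h1, h2]
    exact Real.rpow_le_rpow (by positivity) (by gcongr) (by linarith)

lemma image_mul_Icc {u c d : ℝ} (hu : 0 < u) (hcd : c ≤ d) :
    (fun t => u * t) '' Icc c d = Icc (u * c) (u * d) := by
  ext y
  constructor
  · rintro ⟨t, ⟨h1, h2⟩, rfl⟩
    simp only []
    exact ⟨by nlinarith, by nlinarith⟩
  · rintro ⟨h1, h2⟩
    refine ⟨y / u, ⟨?_, ?_⟩, mul_div_cancel₀ _ hu.ne'⟩
    · rw [le_div_iff₀ hu]; linarith [h1]
    · rw [div_le_iff₀ hu]; linarith [h2]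

lemma integrableOn_comp_div {f : ℝ → ℂ} {c d u : ℝ} (hu : 0 < u) (hcd : c ≤ d)
    (hf : IntegrableOn f (Icc c d)) :
    IntegrableOn (fun x => f (x / u)) (Icc (u * c) (u * d)) := by
  rw [← image_mul_Icc hu hcd,
    integrableOn_image_iff_integrableOn_abs_deriv_smul measurableSet_Icc
      (fun t _ => by simpa using ((hasDerivAt_id t).const_mul u).hasDerivWithinAt)
      (fun t1 _ t2 _ h => by
        simpa [mul_right_inj' hu.ne'] using h)]
  have : (fun t => |u| • f (u * t / u)) = fun t => |u| • f t := by
    funext t; rw [mul_div_cancel_left₀ _ hu.ne']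
  rw [this]
  exact hf.smul (|u|)

lemma setIntegral_norm_comp_div {f : ℝ → ℂ} {c d u : ℝ} (hu : 0 < u) :
    ∫ x in Icc (u * c) (u * d), ‖f (x / u)‖ = u * ∫ t in Icc c d, ‖f t‖ := by
  rcases le_or_gt c d with hcd | hcd
  · rw [← image_mul_Icc hu hcd,
      integral_image_eq_integral_abs_deriv_smul measurableSet_Icc
        (fun t _ => by simpa using ((hasDerivAt_id t).const_mul u).hasDerivWithinAt)
        (fun t1 _ t2 _ h => by simpa [mul_right_inj' hu.ne'] using h)]
    have : (fun t => |u| • ‖f (u * t / u)‖) = fun t => u * ‖f t‖ := by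
      funext t
      rw [mul_div_cancel_left₀ _ hu.ne', smul_eq_mul, abs_of_pos hu]
    rw [this, integral_const_mul]
  · have h1 : Icc (u*c) (u*d) = ∅ := Icc_eq_empty (by intro h; nlinarith)
    have h2 : Icc c d = ∅ := Icc_eq_empty (by exact not_le.mpr hcd)
    rw [h1, h2]
    simp

end Stmt6Helpers

open Stmt6Helpers

set_option maxHeartbeats 2000000 in
theorem stmt6_aux (a b : ℝ) (ha : 0 < a) (hab : a < b) (f : ℝ → ℂ) (hmf : Measurable f)
    (hf : IntegrableOn f (Icc a b)) (s : ℂ) :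
    (∫ x in a..b, f x * (x:ℂ) ^ (-s)) ^ 2 =
      2 * ∫ x in (a ^ 2)..(b ^ 2), (x:ℂ) ^ (-s) *
        ∫ u in Real.sqrt x..min (x / a) b, f u * f (x / u) * (u:ℂ)⁻¹ := by
  have hb : 0 < b := ha.trans hab
  set φ : ℝ → ℂ := fun x => Complex.exp ((Real.log x : ℂ) * (-s)) with hφdef
  have hφ : ∀ x : ℝ, 0 < x → φ x = (x:ℂ) ^ (-s) := by
    intro x hx
    rw [hφdef]
    show Complex.exp ((Real.log x : ℂ) * (-s)) = _
    rw [Complex.cpow_def_of_ne_zero (by exact_mod_cast hx.ne' : (x:ℂ) ≠ 0),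
      ← Complex.ofReal_log hx.le]
  set G : ℝ × ℝ → ℂ := fun q => φ q.2 * (f q.1 * f (q.2 / q.1) * (q.1:ℂ)⁻¹) with hGdef
  set S : Set (ℝ × ℝ) := {q : ℝ × ℝ | q.1 ∈ Icc a b ∧ q.2 ∈ Icc (q.1 * a) (q.1 * b)}
    with hSdef
  have hSm : MeasurableSet S := by
    have : S = ({q : ℝ × ℝ | a ≤ q.1} ∩ {q : ℝ × ℝ | q.1 ≤ b}) ∩
        ({q : ℝ × ℝ | q.1 * a ≤ q.2} ∩ {q : ℝ × ℝ | q.2 ≤ q.1 * b}) := by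
      rw [hSdef]; ext q; simp [mem_Icc, and_assoc]
    rw [this]
    exact ((measurableSet_le measurable_const measurable_fst).inter
        (measurableSet_le measurable_fst measurable_const)).inter
      ((measurableSet_le (measurable_fst.mul_const a) measurable_snd).inter
        (measurableSet_le measurable_snd (measurable_fst.mul_const b)))
  have hφm : Measurable φ := by
    rw [hφdef]
    exact Complex.measurable_exp.comp
      ((Complex.measurable_ofReal.comp Real.measurable_log).mul_const _)
  have hGm : Measurable G := by
    rw [hGdef]
    exact (hφm.comp measurable_snd).mul
      (((hmf.comp measurable_fst).mul (hmf.comp (measurable_snd.div measurable_fst))).mul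
        ((Complex.measurable_ofReal.comp measurable_fst).inv))
  have hFm : Measurable (S.indicator G) := hGm.indicator hSm
  have hslice : ∀ u x, S.indicator G (u, x) =
      if u ∈ Icc a b then (Icc (u * a) (u * b)).indicator (fun x => G (u, x)) x else 0 := by
    intro u x
    by_cases hu : u ∈ Icc a b
    · rw [if_pos hu]
      by_cases hx : x ∈ Icc (u * a) (u * b)
      · rw [Set.indicator_of_mem hx, Set.indicator_of_mem (show (u,x) ∈ S from ⟨hu, hx⟩)]
      · rw [Set.indicator_of_notMem hx, Set.indicator_of_notMem
          (show (u,x) ∉ S from fun h => hx h.2)]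
    · rw [if_neg hu, Set.indicator_of_notMem (show (u,x) ∉ S from fun h => hu h.1)]
  set M : ℝ := ∫ t in Icc a b, ‖f t‖ with hMdef
  have hM0 : 0 ≤ M := integral_nonneg fun t => norm_nonneg _
  set C : ℝ := max ((a ^ 2) ^ (-s.re)) ((b ^ 2) ^ (-s.re)) with hCdef
  have hC0 : 0 ≤ C := le_max_of_le_left (Real.rpow_nonneg (by positivity) _)
  have hφbound : ∀ x : ℝ, a ^ 2 ≤ x → x ≤ b ^ 2 → ‖φ x‖ ≤ C := by
    intro x h1 h2
    have hx0 : 0 < x := lt_of_lt_of_le (by positivity) h1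
    rw [hφ x hx0, Complex.norm_cpow_eq_rpow_re_of_pos hx0,
      Complex.neg_re]
    exact rpow_le_max _ (by positivity) h1 h2
  have hint_slice : ∀ u ∈ Icc a b, IntegrableOn (fun x => G (u, x)) (Icc (u * a) (u * b)) := by
    intro u hu
    have hu0 : 0 < u := lt_of_lt_of_le ha hu.1
    have hsub : Icc (u * a) (u * b) ⊆ ({0}ᶜ : Set ℝ) := by
      intro y hy
      simp only [mem_compl_iff, mem_singleton_iff]
      exact (lt_of_lt_of_le (by positivity) hy.1).ne'
    have hcont : ContinuousOn φ (Icc (u * a) (u * b)) := by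
      rw [hφdef]
      exact Complex.continuous_exp.comp_continuousOn
        ((Complex.continuous_ofReal.comp_continuousOn
          (Real.continuousOn_log.mono hsub)).mul continuousOn_const)
    have h1 := integrableOn_comp_div hu0 hab.le hf
    have h3 := IntegrableOn.continuousOn_mul hcont h1 isCompact_Icc
    have heq : (fun x => G (u, x)) = fun x => (f u * (u:ℂ)⁻¹) * (φ x * f (x / u)) := by
      funext x
      show φ x * (f u * f (x / u) * (u:ℂ)⁻¹) = _
      ring
    rw [heq]
    exact h3.const_mul _
  have hnorm : ∀ u ∈ Icc a b,
      ∫ x, ‖S.indicator G (u, x)‖ ≤ C * a⁻¹ * (b * M) * ‖f u‖ := by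
    intro u hu
    have hu0 : 0 < u := lt_of_lt_of_le ha hu.1
    have step1 : ∫ x, ‖S.indicator G (u, x)‖ = ∫ x in Icc (u * a) (u * b), ‖G (u, x)‖ := by
      simp only [hslice, if_pos hu, norm_indicator_eq_indicator_norm]
      rw [integral_indicator measurableSet_Icc]
    have step2 : ∫ x in Icc (u * a) (u * b), ‖G (u, x)‖
        ≤ ∫ x in Icc (u * a) (u * b), C * ‖f u‖ * a⁻¹ * ‖f (x / u)‖ := by
      refine setIntegral_mono_on ((hint_slice u hu).norm)
        (((integrableOn_comp_div hu0 hab.le hf).norm).const_mul _) measurableSet_Icc ?_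
      intro x hx
      have hb1 : ‖φ x‖ ≤ C :=
        hφbound x (by nlinarith [hu.1, hu.2, hx.1, hx.2]) (by nlinarith [hu.1, hu.2, hx.1, hx.2])
      have e1 : ‖(u:ℂ)⁻¹‖ ≤ a⁻¹ := by
        rw [norm_inv, Complex.norm_real, Real.norm_eq_abs, abs_of_pos hu0]
        rw [inv_le_inv₀ hu0 ha]
        exact hu.1
      have e2 : ‖G (u, x)‖ = ‖φ x‖ * (‖f u‖ * ‖f (x / u)‖ * ‖(u:ℂ)⁻¹‖) := by
        show ‖φ x * (f u * f (x / u) * (u:ℂ)⁻¹)‖ = _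
        simp [norm_mul]
      rw [e2]
      calc ‖φ x‖ * (‖f u‖ * ‖f (x / u)‖ * ‖(u:ℂ)⁻¹‖)
          ≤ C * (‖f u‖ * ‖f (x / u)‖ * a⁻¹) := by
            apply mul_le_mul hb1 _ (by positivity) hC0
            apply mul_le_mul_of_nonneg_left e1 (by positivity)
        _ = C * ‖f u‖ * a⁻¹ * ‖f (x / u)‖ := by ring
    have step3 : ∫ x in Icc (u * a) (u * b), C * ‖f u‖ * a⁻¹ * ‖f (x / u)‖
        = C * ‖f u‖ * a⁻¹ * (u * M) := by
      simp only [mul_assoc, integral_const_mul]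
      rw [setIntegral_norm_comp_div hu0]
    have key : C * ‖f u‖ * a⁻¹ * (u * M) ≤ C * a⁻¹ * (b * M) * ‖f u‖ := by
      have h0 : 0 ≤ C * ‖f u‖ * a⁻¹ := by positivity
      have huM : u * M ≤ b * M := mul_le_mul_of_nonneg_right hu.2 hM0
      refine le_of_le_of_eq (mul_le_mul_of_nonneg_left huM h0) (by ring)
    linarith [step1, step2, step3, key]
  have hFint : Integrable (S.indicator G) ((volume : Measure ℝ).prod volume) := by
    rw [integrable_prod_iff hFm.aestronglyMeasurable]
    constructor
    · refine Eventually.of_forall fun u => ?_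
      by_cases hu : u ∈ Icc a b
      · have heq : (fun x => S.indicator G (u, x))
            = (Icc (u * a) (u * b)).indicator (fun x => G (u, x)) := by
          funext x; rw [hslice, if_pos hu]
        rw [heq, integrable_indicator_iff measurableSet_Icc]
        exact hint_slice u hu
      · have heq : (fun x => S.indicator G (u, x)) = fun _ => 0 := by
          funext x; rw [hslice, if_neg hu]
        rw [heq]
        exact integrable_zero _ _ _
    · refine Integrable.mono' (IntegrableOn.integrable_indicator
        (hf.norm.const_mul (C * a⁻¹ * (b * M))) measurableSet_Icc) ((hFm.norm.stronglyMeasurable.integral_prod_right').aestronglyMeasurable) ?_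
      refine Eventually.of_forall fun u => ?_
      by_cases hu : u ∈ Icc a b
      · rw [indicator_of_mem hu, Real.norm_eq_abs,
          _root_.abs_of_nonneg (integral_nonneg fun x => norm_nonneg _)]
        exact hnorm u hu
      · rw [indicator_of_notMem hu]
        simp only [hslice, if_neg hu]
        simp
  have step2' : ∀ u ∈ Icc a b, (∫ x in Icc (u * a) (u * b), G (u, x))
      = f u * (u:ℂ) ^ (-s) * ∫ v in a..b, f v * (v:ℂ) ^ (-s) := by
    intro u hu
    have hu0 : 0 < u := lt_of_lt_of_le ha hu.1
    have huab : u * a ≤ u * b := by nlinarith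
    have hcd := intervalIntegral.integral_comp_div (a := u * a) (b := u * b)
      (fun v => f v * (v:ℂ) ^ (-s)) hu0.ne'
    rw [mul_div_cancel_left₀ _ hu0.ne', mul_div_cancel_left₀ _ hu0.ne'] at hcd
    have e1 : (∫ x in Icc (u * a) (u * b), G (u, x))
        = ∫ x in (u*a)..(u*b), f u * (u:ℂ) ^ (-s) *
            ((u⁻¹ : ℝ) • (f (x / u) * (((x / u : ℝ)):ℂ) ^ (-s))) := by
      rw [integral_Icc_eq_integral_Ioc, ← intervalIntegral.integral_of_le huab]
      refine intervalIntegral.integral_congr fun x hx => ?_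
      rw [uIcc_of_le huab] at hx
      have hx0 : 0 < x := lt_of_lt_of_le (by positivity) hx.1
      show φ x * (f u * f (x / u) * (u:ℂ)⁻¹) = _
      rw [hφ x hx0]
      have hsplit : ((x:ℝ):ℂ) ^ (-s) = (((x / u : ℝ)):ℂ) ^ (-s) * ((u:ℝ):ℂ) ^ (-s) := by
        rw [← Complex.mul_cpow_ofReal_nonneg (by positivity) hu0.le,
          ← Complex.ofReal_mul, div_mul_cancel₀ _ hu0.ne']
      rw [hsplit, real_smul]
      push_cast
      have hu0' : (u:ℂ) ≠ 0 := by exact_mod_cast hu0.ne'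
      field_simp
    rw [e1, intervalIntegral.integral_const_mul, intervalIntegral.integral_smul, hcd,
      smul_smul, inv_mul_cancel₀ hu0.ne', one_smul]
  have houter : (fun u => ∫ x, S.indicator G (u, x))
      = (Icc a b).indicator (fun u => ∫ x in Icc (u * a) (u * b), G (u, x)) := by
    funext u
    by_cases hu : u ∈ Icc a b
    · rw [indicator_of_mem hu]
      simp only [hslice, if_pos hu]
      rw [integral_indicator measurableSet_Icc]
    · rw [indicator_of_notMem hu]
      simp only [hslice, if_neg hu]
      exact integral_zero _ _
  have lhs_eq : (∫ x in a..b, f x * (x:ℂ) ^ (-s)) ^ 2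
      = ∫ u, ∫ x, S.indicator G (u, x) := by
    have h2 : (∫ u, ∫ x, S.indicator G (u, x))
        = ∫ u in Icc a b, f u * (u:ℂ) ^ (-s) * ∫ v in a..b, f v * (v:ℂ) ^ (-s) := by
      rw [houter, integral_indicator measurableSet_Icc]
      exact setIntegral_congr_fun measurableSet_Icc step2'
    rw [h2, integral_Icc_eq_integral_Ioc, ← intervalIntegral.integral_of_le hab.le,
      intervalIntegral.integral_mul_const, sq]
  have hswap : (∫ u, ∫ x, S.indicator G (u, x)) = ∫ x, ∫ u, S.indicator G (u, x) :=
    integral_integral_swap hFint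
  have hslice2 : ∀ x u, S.indicator G (u, x)
      = (Icc (max a (x / b)) (min (x / a) b)).indicator (fun u => G (u, x)) u := by
    intro x u
    have hmem : ((u, x) ∈ S) ↔ u ∈ Icc (max a (x / b)) (min (x / a) b) := by
      rw [hSdef]
      simp only [mem_setOf_eq, mem_Icc, max_le_iff, le_min_iff]
      constructor
      · rintro ⟨⟨h1, h2⟩, h3, h4⟩
        exact ⟨⟨h1, (div_le_iff₀ hb).mpr h4⟩, (le_div_iff₀ ha).mpr h3, h2⟩
      · rintro ⟨⟨h1, h2⟩, h3, h4⟩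
        exact ⟨⟨h1, h4⟩, (le_div_iff₀ ha).mp h3, (div_le_iff₀ hb).mp h2⟩
    by_cases h : (u, x) ∈ S
    · rw [indicator_of_mem h, indicator_of_mem (hmem.mp h)]
    · rw [indicator_of_notMem h, indicator_of_notMem (fun hc => h (hmem.mpr hc))]
  have hempty : ∀ x : ℝ, x ∉ Icc (a ^ 2) (b ^ 2) →
      Icc (max a (x / b)) (min (x / a) b) = ∅ := by
    intro x hx
    rw [Icc_eq_empty]
    intro hle
    apply hx
    have h1 : a ≤ x / a := le_trans (le_max_left _ _) (hle.trans (min_le_left _ _))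
    have h2 : x / b ≤ b := le_trans (le_trans (le_max_right a _) hle) (min_le_right _ _)
    have h3 := (le_div_iff₀ ha).mp h1
    have h4 := (div_le_iff₀ hb).mp h2
    constructor
    · nlinarith
    · nlinarith
  have hrhs1 : (∫ x, ∫ u, S.indicator G (u, x))
      = ∫ x in Icc (a ^ 2) (b ^ 2),
          ∫ u in Icc (max a (x / b)) (min (x / a) b), G (u, x) := by
    have hinner : ∀ x, (∫ u, S.indicator G (u, x))
        = ∫ u in Icc (max a (x / b)) (min (x / a) b), G (u, x) := by
      intro x
      simp only [hslice2]
      rw [integral_indicator measurableSet_Icc]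
    simp only [hinner]
    have hsupp : (fun x => ∫ u in Icc (max a (x / b)) (min (x / a) b), G (u, x))
        = (Icc (a ^ 2) (b ^ 2)).indicator
            (fun x => ∫ u in Icc (max a (x / b)) (min (x / a) b), G (u, x)) := by
      funext x
      by_cases hx : x ∈ Icc (a ^ 2) (b ^ 2)
      · rw [indicator_of_mem hx]
      · rw [indicator_of_notMem hx, hempty x hx]
        simp
    conv_lhs => rw [hsupp]
    rw [integral_indicator measurableSet_Icc]
  have hb2ab : a ^ 2 ≤ b ^ 2 := by nlinarith
  rw [lhs_eq, hswap, hrhs1, intervalIntegral.integral_of_le hb2ab,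
    ← integral_Icc_eq_integral_Ioc, ← integral_const_mul]
  refine setIntegral_congr_ae measurableSet_Icc ?_
  filter_upwards [hFint.prod_left_ae] with x hix hxmem
  have hx0 : 0 < x := lt_of_lt_of_le (by positivity) hxmem.1
  set r := Real.sqrt x with hrdef
  have hr0 : 0 < r := Real.sqrt_pos.mpr hx0
  have hra : a ≤ r := by
    rw [hrdef]
    exact (Real.le_sqrt ha.le hx0.le).mpr hxmem.1
  have hrb : r ≤ b := by
    rw [hrdef, show b = Real.sqrt (b ^ 2) by rw [Real.sqrt_sq hb.le]]
    exact Real.sqrt_le_sqrt hxmem.2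
  have hrr : r * r = x := Real.mul_self_sqrt hx0.le
  set α := max a (x / b) with hαdef
  set β := min (x / a) b with hβdef
  have hαr : α ≤ r := by
    rw [hαdef]
    refine max_le hra ?_
    rw [div_le_iff₀ hb]
    nlinarith
  have hrβ : r ≤ β := by
    rw [hβdef]
    refine le_min ?_ hrb
    rw [le_div_iff₀ ha]
    nlinarith
  have hxβ : x / β = α := by
    rw [hαdef, hβdef]
    rcases le_total (x / a) b with hc | hc
    · have hc' := (div_le_iff₀ ha).mp hc
      rw [min_eq_left hc, max_eq_left (by rw [div_le_iff₀ hb]; nlinarith),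
        div_div_cancel₀ hx0.ne']
    · have hc' := (le_div_iff₀ ha).mp hc
      rw [min_eq_right hc, max_eq_right (by rw [le_div_iff₀ hb]; nlinarith)]
  have hxr : x / r = r := by rw [hrdef]; exact Real.div_sqrt
  have hone : IntegrableOn (fun u => G (u, x)) (Icc α β) := by
    have heq : (fun u => S.indicator G (u, x)) = (Icc α β).indicator (fun u => G (u, x)) := by
      funext u
      rw [hslice2 x u, ← hαdef, ← hβdef]
    rw [heq] at hix
    exact (integrable_indicator_iff measurableSet_Icc).mp hix
  have hsplitset : Icc α β = Icc α r ∪ Ioc r β := (Icc_union_Ioc_eq_Icc hαr hrβ).symm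
  have hdisj : Disjoint (Icc α r) (Ioc r β) :=
    Set.disjoint_left.mpr fun u hu1 hu2 => absurd hu1.2 (not_le.mpr hu2.1)
  have hsum : (∫ u in Icc α β, G (u, x))
      = (∫ u in Icc α r, G (u, x)) + ∫ u in Ioc r β, G (u, x) := by
    rw [hsplitset]
    exact setIntegral_union hdisj measurableSet_Ioc
      (hone.mono_set (Icc_subset_Icc le_rfl hrβ))
      (hone.mono_set ((Ioc_subset_Icc_self).trans (Icc_subset_Icc hαr le_rfl)))
  have hGg : ∀ t : Set ℝ, (∫ u in t, G (u, x))
      = φ x * ∫ u in t, f u * f (x / u) * (u:ℂ)⁻¹ := by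
    intro t
    rw [← integral_const_mul]
  have hsymm : (∫ u in Icc α r, f u * f (x / u) * (u:ℂ)⁻¹)
      = ∫ u in Icc r β, f u * f (x / u) * (u:ℂ)⁻¹ := by
    have h := symm_cov f hx0 hr0 hrβ
    rwa [hxβ, hxr] at h
  rw [hsum, hGg (Icc α r), hGg (Ioc r β), hsymm, integral_Icc_eq_integral_Ioc,
    ← intervalIntegral.integral_of_le hrβ, hφ x hx0]
  ring

theorem stmt6 (a b : ℝ) (ha : 0 < a) (hab : a < b) (f : ℝ → ℂ)
    (hf : IntegrableOn f (Icc a b)) (s : ℂ) :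
    (∫ x in a..b, f x * (x:ℂ) ^ (-s)) ^ 2 =
      2 * ∫ x in (a ^ 2)..(b ^ 2), (x:ℂ) ^ (-s) *
        ∫ u in Real.sqrt x..min (x / a) b, f u * f (x / u) * (u:ℂ)⁻¹ := by
  have hb : 0 < b := ha.trans hab
  have h1 : AEStronglyMeasurable f (volume.restrict (Icc a b)) := hf.aestronglyMeasurable
  set g : ℝ → ℂ := h1.mk f with hgdef
  have hgm : StronglyMeasurable g := h1.stronglyMeasurable_mk
  have hfg : f =ᵐ[volume.restrict (Icc a b)] g := h1.ae_eq_mk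
  have hgint : IntegrableOn g (Icc a b) := hf.congr hfg
  have hN : volume ({y : ℝ | f y ≠ g y} ∩ Icc a b) = 0 := by
    have h2 := hfg
    rw [EventuallyEq, ae_iff] at h2
    rwa [Measure.restrict_apply' measurableSet_Icc] at h2
  have haefg : ∀ᵐ y : ℝ, y ∈ Icc a b → f y = g y := by
    filter_upwards [measure_eq_zero_iff_ae_notMem.mp hN] with y hy hyIcc
    by_contra hne
    exact hy ⟨hne, hyIcc⟩
  have key := stmt6_aux a b ha hab g hgm.measurable hgint s
  have hLHS : (∫ x in a..b, f x * (x:ℂ) ^ (-s)) = ∫ x in a..b, g x * (x:ℂ) ^ (-s) := by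
    refine intervalIntegral.integral_congr_ae ?_
    filter_upwards [haefg] with y hy hymem
    rw [uIoc_of_le hab.le] at hymem
    rw [hy ⟨hymem.1.le, hymem.2⟩]
  have hRHS : (∫ x in (a^2)..(b^2), (x:ℂ) ^ (-s) *
        ∫ u in Real.sqrt x..min (x / a) b, f u * f (x / u) * (u:ℂ)⁻¹)
      = ∫ x in (a^2)..(b^2), (x:ℂ) ^ (-s) *
        ∫ u in Real.sqrt x..min (x / a) b, g u * g (x / u) * (u:ℂ)⁻¹ := by
    refine intervalIntegral.integral_congr fun x hx => ?_
    rw [uIcc_of_le (by nlinarith : a^2 ≤ b^2)] at hx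
    have hx0 : 0 < x := lt_of_lt_of_le (by positivity) hx.1
    have hr0 : 0 < Real.sqrt x := Real.sqrt_pos.mpr hx0
    have hrr : Real.sqrt x * Real.sqrt x = x := Real.mul_self_sqrt hx0.le
    have hra : a ≤ Real.sqrt x := (Real.le_sqrt ha.le hx0.le).mpr hx.1
    have hrb : Real.sqrt x ≤ b := by
      rw [show b = Real.sqrt (b ^ 2) by rw [Real.sqrt_sq hb.le]]
      exact Real.sqrt_le_sqrt hx.2
    have hrβ : Real.sqrt x ≤ min (x / a) b := by
      refine le_min ?_ hrb
      rw [le_div_iff₀ ha]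
      nlinarith
    congr 1
    refine intervalIntegral.integral_congr_ae ?_
    filter_upwards [haefg, ae_div_nmem hx0 hN] with u hu1 hu2 humem
    rw [uIoc_of_le hrβ] at humem
    have hu0 : 0 < u := hr0.trans humem.1
    have huIcc : u ∈ Icc a b := ⟨hra.trans humem.1.le, humem.2.trans (min_le_right _ _)⟩
    have hua : u * a ≤ x := (le_div_iff₀ ha).mp (humem.2.trans (min_le_left _ _))
    have hxuIcc : x / u ∈ Icc a b := by
      constructor
      · rw [le_div_iff₀ hu0]; nlinarith
      · rw [div_le_iff₀ hu0]; nlinarith [humem.1, hrb, hrr]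
    have e2 : f (x / u) = g (x / u) := by
      by_contra hne
      exact hu2 hu0 ⟨hne, hxuIcc⟩
    rw [hu1 huIcc, e2]
  rw [hLHS, hRHS, key]
end

section
/- Let P(y) = a₀ + a₁y + a₂y² + a₃y³ + a₄y⁴ be a real polynomial and set E₂(T) = ∫₀^T |ζ(1/2+it)|⁴ dt − T·P(log T). Assume there is a constant C such that ∫₁^T E₂(t)² dt ≤ C·T²·(log T)²² for all T ≥ 2. Then for every s with Re s > 1/2 the integral ∫₁^∞ E₂(x) x^{−s−1} dx converges absolutely, the function G(s) = 4!·a₄/(s−1)⁵ + Σ_{j=0}^{3} (a_j·j! + a_{j+1}·(j+1)!)/(s−1)^{j+1} − E₂(1) + s·∫₁^∞ E₂(x) x^{−s−1} dx is analytic on {s : Re s > 1/2} ∖ {1}, and G(s) = Z₂(s) for every s with Re s > 1. In particular Z₂ continues analytically to {Re s > 1/2} ∖ {1}. -/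
open MeasureTheory Set Complex Filter Finset Topology

noncomputable def zf (t : ℝ) : ℝ := ‖riemannZeta (1/2 + t * Complex.I)‖ ^ 4

lemma zf_cont : Continuous zf := by
  have h : ∀ t : ℝ, ContinuousAt zf t := by
    intro t
    have h1 : (1/2 + (t:ℂ) * Complex.I) ≠ 1 := by
      intro h
      have := congrArg Complex.re h
      simp at this
    have h2 : ContinuousAt riemannZeta (1/2 + (t:ℂ) * Complex.I) :=
      (differentiableAt_riemannZeta h1).continuousAt
    have h3 : Continuous (fun t : ℝ => 1/2 + (t:ℂ) * Complex.I) := by continuity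
    have h4 : ContinuousAt (fun t : ℝ => riemannZeta (1/2 + t * Complex.I)) t :=
      ContinuousAt.comp (g := riemannZeta) h2 h3.continuousAt
    exact h4.norm.pow 4
  exact continuous_iff_continuousAt.2 h

lemma zf_nonneg (t : ℝ) : 0 ≤ zf t := by unfold zf; positivity

noncomputable def ZI (x : ℝ) : ℝ := ∫ t in (0:ℝ)..x, zf t

lemma ZI_cont : Continuous ZI :=
  intervalIntegral.continuous_primitive (fun a b => zf_cont.intervalIntegrable a b) 0

lemma ZI_deriv (x : ℝ) : HasDerivAt ZI (zf x) x :=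
  intervalIntegral.integral_hasDerivAt_right (zf_cont.intervalIntegrable 0 x)
    (zf_cont.stronglyMeasurableAtFilter _ _) zf_cont.continuousAt

lemma ZI_mono : Monotone ZI := by
  intro x y hxy
  have : ZI y - ZI x = ∫ t in x..y, zf t := by
    rw [ZI, ZI, ← intervalIntegral.integral_interval_sub_left
      (zf_cont.intervalIntegrable 0 y) (zf_cont.intervalIntegrable 0 x)]
  nlinarith [intervalIntegral.integral_nonneg (μ := volume) (f := zf) hxy (fun u _ => zf_nonneg u)]

lemma ZI_nonneg {x : ℝ} (hx : 0 ≤ x) : 0 ≤ ZI x := by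
  have : ZI 0 = 0 := by simp [ZI]
  simpa [this] using ZI_mono hx

lemma logpow_bound (n : ℕ) {ε : ℝ} (hε : 0 < ε) :
    ∃ D : ℝ, 0 < D ∧ ∀ y : ℝ, 1 ≤ y → Real.log y ^ n ≤ D * y ^ ε := by
  rcases Nat.eq_zero_or_pos n with hn | hn
  · exact ⟨1, one_pos, fun y hy => by
      simp [hn]
      calc (1:ℝ) = 1 ^ ε := by rw [Real.one_rpow]
      _ ≤ y ^ ε := Real.rpow_le_rpow (by norm_num) hy hε.le⟩
  · have hδ : 0 < ε / n := by positivity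
    refine ⟨(n / ε) ^ n, by positivity, fun y hy => ?_⟩
    have h1 : Real.log y ≤ y ^ (ε / n) / (ε / n) :=
      Real.log_le_rpow_div (by linarith) hδ
    have h2 : Real.log y ^ n ≤ (y ^ (ε / n) / (ε / n)) ^ n :=
      pow_le_pow_left₀ (Real.log_nonneg hy) h1 n
    calc Real.log y ^ n ≤ (y ^ (ε / n) / (ε / n)) ^ n := h2
      _ = (n / ε) ^ n * (y ^ (ε / n)) ^ n := by
          rw [div_pow, div_pow]; field_simp
          rw [← mul_pow, mul_div_cancel₀ (n:ℝ) hε.ne']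
      _ = (n / ε) ^ n * y ^ ε := by
          rw [← Real.rpow_natCast (y ^ (ε / n)) n, ← Real.rpow_mul (by linarith)]
          congr 2
          field_simp

noncomputable def Pg (a : ℕ → ℝ) (y : ℝ) : ℝ := ∑ j ∈ Finset.range 5, a j * y ^ j

noncomputable def EE (a : ℕ → ℝ) (x : ℝ) : ℝ := ZI x - x * Pg a (Real.log x)

lemma EE_contAt (a : ℕ → ℝ) {x : ℝ} (hx : x ≠ 0) : ContinuousAt (EE a) x := by
  apply ZI_cont.continuousAt.sub
  apply continuousAt_id.mul
  have : ContinuousAt (Pg a) (Real.log x) := by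
    apply Continuous.continuousAt
    unfold Pg
    exact continuous_finset_sum _ (fun j _ => continuous_const.mul (continuous_pow j))
  exact this.comp (Real.continuousAt_log hx)

lemma EE_contOn (a : ℕ → ℝ) : ContinuousOn (EE a) (Ioi 0) :=
  fun x hx => (EE_contAt a (ne_of_gt hx)).continuousWithinAt

lemma EE_intInt (a : ℕ → ℝ) {u v : ℝ} (hu : 0 < u) (hv : 0 < v) :
    IntervalIntegrable (EE a) volume u v := by
  apply ContinuousOn.intervalIntegrable
  intro x hx
  have hx0 : 0 < x := lt_of_lt_of_le (lt_min hu hv) hx.1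
  exact ((EE_contAt a hx0.ne').continuousWithinAt)

lemma EEsq_intInt (a : ℕ → ℝ) {u v : ℝ} (hu : 0 < u) (hv : 0 < v) :
    IntervalIntegrable (fun t => EE a t ^ 2) volume u v := by
  apply ContinuousOn.intervalIntegrable
  intro x hx
  have hx0 : 0 < x := lt_of_lt_of_le (lt_min hu hv) hx.1
  exact ((EE_contAt a hx0.ne').pow 2).continuousWithinAt

lemma Pg_bound (a : ℕ → ℝ) {ε : ℝ} (hε : 0 < ε) :
    ∃ D : ℝ, 0 < D ∧ ∀ t : ℝ, 1 ≤ t → |Pg a (Real.log t)| ≤ D * t ^ ε := by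
  have h : ∀ j : ℕ, ∃ D : ℝ, 0 < D ∧ ∀ y : ℝ, 1 ≤ y → Real.log y ^ j ≤ D * y ^ ε :=
    fun j => logpow_bound j hε
  choose D hDpos hD using h
  have hsum : 0 ≤ ∑ j ∈ Finset.range 5, |a j| * D j :=
    Finset.sum_nonneg fun j _ => mul_nonneg (abs_nonneg _) (hDpos j).le
  refine ⟨∑ j ∈ Finset.range 5, |a j| * D j + 1, by linarith, fun t ht => ?_⟩
  have htε : (0:ℝ) < t ^ ε := Real.rpow_pos_of_pos (by linarith) ε
  calc |Pg a (Real.log t)| ≤ ∑ j ∈ Finset.range 5, |a j * Real.log t ^ j| :=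
        Finset.abs_sum_le_sum_abs _ _
    _ = ∑ j ∈ Finset.range 5, |a j| * Real.log t ^ j := by
        refine Finset.sum_congr rfl fun j _ => ?_
        rw [abs_mul, _root_.abs_of_nonneg (pow_nonneg (Real.log_nonneg ht) j)]
    _ ≤ ∑ j ∈ Finset.range 5, |a j| * (D j * t ^ ε) := by
        refine Finset.sum_le_sum fun j _ => ?_
        exact mul_le_mul_of_nonneg_left (hD j t ht) (abs_nonneg _)
    _ = (∑ j ∈ Finset.range 5, |a j| * D j) * t ^ ε := by
        rw [Finset.sum_mul]; exact Finset.sum_congr rfl fun j _ => by ring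
    _ ≤ (∑ j ∈ Finset.range 5, |a j| * D j + 1) * t ^ ε := by nlinarith

noncomputable def M2 (a : ℕ → ℝ) (T : ℝ) : ℝ := ∫ t in (1:ℝ)..T, EE a t ^ 2

lemma M2_nonneg (a : ℕ → ℝ) {T : ℝ} (hT : 1 ≤ T) : 0 ≤ M2 a T :=
  intervalIntegral.integral_nonneg hT (fun u _ => sq_nonneg _)

lemma M2_mono (a : ℕ → ℝ) {u v : ℝ} (hu : 1 ≤ u) (huv : u ≤ v) : M2 a u ≤ M2 a v := by
  have h : M2 a v - M2 a u = ∫ t in u..v, EE a t ^ 2 :=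
    intervalIntegral.integral_interval_sub_left
      (EEsq_intInt a one_pos (by linarith)) (EEsq_intInt a one_pos (by linarith))
  nlinarith [intervalIntegral.integral_nonneg (μ := volume) (f := fun t => EE a t ^ 2) huv
    (fun u _ => sq_nonneg _)]

lemma M2_deriv (a : ℕ → ℝ) {x : ℝ} (hx : 0 < x) : HasDerivAt (M2 a) (EE a x ^ 2) x := by
  apply intervalIntegral.integral_hasDerivAt_right (EEsq_intInt a one_pos hx)
  · exact ContinuousAt.stronglyMeasurableAtFilter isOpen_Ioi
      (fun y hy => ((EE_contAt a (ne_of_gt hy)).pow 2)) x hx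
  · exact (EE_contAt a hx.ne').pow 2

lemma M2_bound (a : ℕ → ℝ) {C : ℝ} (hC : 0 ≤ C)
    (hms : ∀ T ≥ (2:ℝ), M2 a T ≤ C * T ^ 2 * Real.log T ^ 22) {ε : ℝ} (hε : 0 < ε) :
    ∃ D : ℝ, 0 < D ∧ ∀ T : ℝ, 1 ≤ T → M2 a T ≤ D * T ^ (2 + ε) := by
  obtain ⟨D1, hD1pos, hD1⟩ := logpow_bound 22 hε
  refine ⟨C * D1 + (C * 4 * Real.log 2 ^ 22 + 1), by positivity, fun T hT => ?_⟩
  have hT0 : (0:ℝ) < T := by linarith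
  have hTε : (1:ℝ) ≤ T ^ (2 + ε) := by
    rw [show (1:ℝ) = 1 ^ (2+ε) by rw [Real.one_rpow]]
    exact Real.rpow_le_rpow (by norm_num) hT (by linarith)
  have h22 : (0:ℝ) ≤ Real.log 2 ^ 22 := by positivity
  have hK : (0:ℝ) ≤ C * 4 * Real.log 2 ^ 22 + 1 := by nlinarith
  have hTp : (0:ℝ) < T ^ (2 + ε) := Real.rpow_pos_of_pos hT0 (2 + ε)
  rcases le_or_gt 2 T with h2 | h2
  · have hms' := hms T h2
    have hpow : T ^ (2:ℕ) * T ^ ε = T ^ (2 + ε) := by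
      rw [← Real.rpow_natCast T 2, ← Real.rpow_add hT0]; norm_num
    have hlog : C * T ^ 2 * Real.log T ^ 22 ≤ C * T ^ 2 * (D1 * T ^ ε) :=
      mul_le_mul_of_nonneg_left (hD1 T hT) (by positivity)
    have h3 : C * T ^ 2 * (D1 * T ^ ε) = C * D1 * T ^ (2+ε) := by
      rw [← hpow]; ring
    nlinarith [mul_le_mul_of_nonneg_right hK hTp.le]
  · have hm : M2 a T ≤ M2 a 2 := M2_mono a hT h2.le
    have h2' := hms 2 le_rfl
    have hM22 : M2 a 2 ≤ C * 4 * Real.log 2 ^ 22 := by norm_num at h2' ⊢; linarith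
    have hCD : 0 ≤ C * D1 := mul_nonneg hC hD1pos.le
    nlinarith [mul_le_mul_of_nonneg_left hTε hK, mul_le_mul_of_nonneg_right hCD hTp.le]

lemma integrableOn_Ioi_of_bound (g : ℝ → ℝ) (hg : ContinuousOn g (Ioi 0))
    (hnn : ∀ x : ℝ, 1 ≤ x → 0 ≤ g x) (B : ℝ) (hB : ∀ T : ℝ, 1 ≤ T → (∫ x in (1:ℝ)..T, g x) ≤ B) :
    IntegrableOn g (Ioi 1) := by
  apply MeasureTheory.integrableOn_Ioi_of_intervalIntegral_norm_bounded B 1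
    (b := fun T : ℝ => T) (l := atTop) ?_ tendsto_id
  · filter_upwards [eventually_ge_atTop (1:ℝ)] with T hT
    have : (∫ x in (1:ℝ)..T, ‖g x‖) = ∫ x in (1:ℝ)..T, g x := by
      apply intervalIntegral.integral_congr
      intro x hx
      rw [uIcc_of_le hT] at hx
      exact Real.norm_of_nonneg (hnn x hx.1)
    rw [this]; exact hB T hT
  · intro T
    rcases le_or_gt T 1 with h | h
    · rw [Set.Ioc_eq_empty (by simp; linarith)]; exact integrableOn_empty
    · have : ContinuousOn g (Icc 1 T) := hg.mono (fun x hx => lt_of_lt_of_le one_pos hx.1)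
      exact (this.integrableOn_Icc).mono_set Ioc_subset_Icc_self

lemma rpow_contOn (p : ℝ) : ContinuousOn (fun x : ℝ => x ^ p) (Ioi 0) :=
  fun x hx => (Real.continuousAt_rpow_const x p (Or.inl (ne_of_gt hx))).continuousWithinAt

lemma rpow_intInt {p u v : ℝ} (hu : 0 < u) (hv : 0 < v) :
    IntervalIntegrable (fun x : ℝ => x ^ p) volume u v := by
  apply ContinuousOn.intervalIntegrable
  intro x hx
  have hx0 : 0 < x := lt_of_lt_of_le (lt_min hu hv) hx.1
  exact (Real.continuousAt_rpow_const x p (Or.inl hx0.ne')).continuousWithinAt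

lemma KEY0 (a : ℕ → ℝ) {C : ℝ} (hC : 0 ≤ C)
    (hms : ∀ T ≥ (2:ℝ), M2 a T ≤ C * T ^ 2 * Real.log T ^ 22) {p : ℝ} (hp : 2 < p) :
    IntegrableOn (fun x : ℝ => EE a x ^ 2 * x ^ (-p)) (Ioi 1) := by
  set ε := (p - 2) / 2 with hεdef
  have hε : 0 < ε := by simp only [hεdef]; linarith
  obtain ⟨D, hDpos, hD⟩ := M2_bound a hC hms hε
  apply integrableOn_Ioi_of_bound _ ?_ ?_ (D + p * (D / ε))
  · intro T hT
    have hT0 : (0:ℝ) < T := by linarith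
    -- integration by parts
    have hu : ∀ x ∈ uIcc (1:ℝ) T, HasDerivAt (M2 a) (EE a x ^ 2) x := by
      intro x hx
      rw [uIcc_of_le hT] at hx
      exact M2_deriv a (by linarith [hx.1])
    have hv : ∀ x ∈ uIcc (1:ℝ) T, HasDerivAt (fun x : ℝ => x ^ (-p)) (-p * x ^ (-p - 1)) x := by
      intro x hx
      rw [uIcc_of_le hT] at hx
      have hx0 : (0:ℝ) < x := by linarith [hx.1]
      simpa using Real.hasDerivAt_rpow_const (p := -p) (Or.inl hx0.ne')
    have hibp := intervalIntegral.integral_mul_deriv_eq_deriv_mul hu hv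
      (EEsq_intInt a one_pos hT0) (((rpow_intInt (p := -p-1) one_pos hT0).const_mul (-p)))
    -- hibp : ∫ x in 1..T, M2 a x * (-p * x^(-p-1)) = M2 a T * T^(-p) - M2 a 1 * 1^(-p) - ∫ EE² x^(-p)
    have hM21 : M2 a 1 = 0 := intervalIntegral.integral_same
    have hsplit : (∫ x in (1:ℝ)..T, M2 a x * (-p * x ^ (-p-1)))
        = -p * ∫ x in (1:ℝ)..T, M2 a x * x ^ (-p-1) := by
      rw [← intervalIntegral.integral_const_mul]
      apply intervalIntegral.integral_congr
      intro x _; ring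
    -- bound the M2 integral
    have hmono : (∫ x in (1:ℝ)..T, M2 a x * x ^ (-p-1)) ≤ ∫ x in (1:ℝ)..T, D * x ^ (1+ε-p) := by
      apply intervalIntegral.integral_mono_on hT
      · apply ContinuousOn.intervalIntegrable
        intro x hx
        rw [uIcc_of_le hT] at hx
        have hx0 : (0:ℝ) < x := by linarith [hx.1]
        have h1 : ContinuousAt (M2 a) x := (M2_deriv a hx0).continuousAt
        exact (h1.mul ((Real.continuousAt_rpow_const x (-p-1) (Or.inl hx0.ne')))).continuousWithinAt
      · exact ((rpow_intInt one_pos hT0).const_mul D)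
      · intro x hx
        have hx1 : (1:ℝ) ≤ x := hx.1
        have hx0 : (0:ℝ) < x := by linarith
        have h1 : M2 a x ≤ D * x ^ ((2:ℝ)+ε) := hD x hx1
        have h2 : x ^ ((2:ℝ)+ε) * x ^ (-p-1) = x ^ (1+ε-p) := by
          rw [← Real.rpow_add hx0]; ring_nf
        calc M2 a x * x ^ (-p-1) ≤ D * x ^ ((2:ℝ)+ε) * x ^ (-p-1) :=
              mul_le_mul_of_nonneg_right h1 (Real.rpow_nonneg hx0.le _)
          _ = D * x ^ (1+ε-p) := by rw [mul_assoc, h2]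
    have hint : (∫ x in (1:ℝ)..T, D * x ^ (1+ε-p)) = D * ((T ^ (2+ε-p) - 1) / (2+ε-p)) := by
      rw [intervalIntegral.integral_const_mul, integral_rpow]
      · norm_num
        left
        congr 1 <;> ring_nf
      · right
        constructor
        · intro h; rw [show (1:ℝ)+ε-p = -1 ↔ ε = p - 2 by constructor <;> intro <;> linarith] at h
          simp only [hεdef] at h; linarith
        · rw [uIcc_of_le hT]; intro h; linarith [h.1]
    have hexp : 2 + ε - p = -ε := by simp only [hεdef]; ring
    have ht1 : T ^ (-ε) ≤ 1 := Real.rpow_le_one_of_one_le_of_nonpos hT (by linarith)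
    have ht0 : 0 ≤ T ^ (-ε) := Real.rpow_nonneg hT0.le _
    have e1 : (T ^ (2+ε-p) - 1) / (2+ε-p) = (1 - T ^ (-ε)) / ε := by
      rw [hexp]
      rw [div_eq_div_iff (by linarith) (by linarith)]
      ring
    have hJ : (∫ x in (1:ℝ)..T, M2 a x * x ^ (-p-1)) ≤ D / ε := by
      calc (∫ x in (1:ℝ)..T, M2 a x * x ^ (-p-1)) ≤ D * ((T ^ (2+ε-p) - 1) / (2+ε-p)) := by
            rw [← hint]; exact hmono
        _ = D * ((1 - T ^ (-ε)) / ε) := by rw [e1]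
        _ ≤ D * (1 / ε) := by gcongr; linarith
        _ = D / ε := by ring
    have hbd1 : M2 a T * T ^ (-p) ≤ D := by
      have h1 : M2 a T ≤ D * T ^ ((2:ℝ)+ε) := hD T hT
      have h2 : T ^ ((2:ℝ)+ε) * T ^ (-p) = T ^ (-ε) := by
        rw [← Real.rpow_add hT0, ← hexp]; ring_nf
      calc M2 a T * T ^ (-p) ≤ D * T ^ ((2:ℝ)+ε) * T ^ (-p) :=
            mul_le_mul_of_nonneg_right h1 (Real.rpow_nonneg hT0.le _)
        _ = D * T ^ (-ε) := by rw [mul_assoc, h2]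
        _ ≤ D := by nlinarith
    have hfin : (∫ x in (1:ℝ)..T, EE a x ^ 2 * x ^ (-p))
        = M2 a T * T ^ (-p) + p * ∫ x in (1:ℝ)..T, M2 a x * x ^ (-p-1) := by
      rw [hsplit, hM21] at hibp
      have h1T : ((1:ℝ)) ^ (-p) = 1 := Real.one_rpow _
      rw [h1T] at hibp
      linarith
    rw [hfin]
    have : p * (∫ x in (1:ℝ)..T, M2 a x * x ^ (-p-1)) ≤ p * (D / ε) :=
      mul_le_mul_of_nonneg_left hJ (by linarith)
    linarith
  · exact (fun x hx => ((EE_contAt a (ne_of_gt hx)).pow 2).continuousWithinAt.mul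
      ((rpow_contOn (-p)).continuousWithinAt hx))
  · intro x hx
    have hx0 : (0:ℝ) < x := by linarith
    exact mul_nonneg (sq_nonneg _) (Real.rpow_nonneg hx0.le _)

lemma cpow_contOn (w : ℂ) : ContinuousOn (fun x : ℝ => (x:ℂ) ^ w) (Ioi 0) := by
  intro x hx
  have h1 : ContinuousAt (fun z : ℂ => z ^ w) (x:ℂ) :=
    continuousAt_cpow_const (Complex.ofReal_mem_slitPlane.2 hx)
  exact (h1.comp Complex.continuous_ofReal.continuousAt).continuousWithinAt

lemma KEY1R (a : ℕ → ℝ) {C : ℝ} (hC : 0 ≤ C)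
    (hms : ∀ T ≥ (2:ℝ), M2 a T ≤ C * T ^ 2 * Real.log T ^ 22) {r : ℝ} (hr : r < -(3/2)) :
    IntegrableOn (fun x : ℝ => |EE a x| * x ^ r) (Ioi 1) := by
  set p : ℝ := 1/2 - r with hpdef
  have hp : 2 < p := by simp only [hpdef]; linarith
  have hq : 2*r + p < -1 := by simp only [hpdef]; linarith
  have hmaj : IntegrableOn (fun x : ℝ => (1/2) * (EE a x ^ 2 * x ^ (-p)) + (1/2) * x ^ (2*r+p))
      (Ioi 1) := by
    exact ((KEY0 a hC hms hp).const_mul _).add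
      (((integrableOn_Ioi_rpow_of_lt hq one_pos).const_mul _))
  apply hmaj.mono'
  · apply ContinuousOn.aestronglyMeasurable _ measurableSet_Ioi
    intro x hx
    have hx0 : (0:ℝ) < x := lt_trans one_pos hx
    exact ((EE_contAt a hx0.ne').abs.continuousWithinAt).mul
      ((rpow_contOn r).mono (fun y (hy : y ∈ Ioi (1:ℝ)) => Set.mem_Ioi.mpr (lt_trans one_pos hy)) x hx)
  · filter_upwards [ae_restrict_mem measurableSet_Ioi] with x hx
    have hx0 : (0:ℝ) < x := lt_trans one_pos hx
    have e1 : x ^ (-p/2) * x ^ (-p/2) = x ^ (-p) := by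
      rw [← Real.rpow_add hx0]; ring_nf
    have e2 : x ^ (r+p/2) * x ^ (r+p/2) = x ^ (2*r+p) := by
      rw [← Real.rpow_add hx0]; ring_nf
    have e3 : x ^ (-p/2) * x ^ (r+p/2) = x ^ r := by
      rw [← Real.rpow_add hx0]; ring_nf
    have hn : ‖|EE a x| * x ^ r‖ = |EE a x| * x ^ r := by
      rw [Real.norm_of_nonneg (mul_nonneg (abs_nonneg _) (Real.rpow_nonneg hx0.le r))]
    rw [hn]
    have expand : (|EE a x| * x ^ (-p/2) - x ^ (r+p/2))^2
        = |EE a x|^2 * (x ^ (-p/2) * x ^ (-p/2)) - 2 * |EE a x| * (x ^ (-p/2) * x ^ (r+p/2))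
          + x ^ (r+p/2) * x ^ (r+p/2) := by ring
    rw [e1, e2, e3, _root_.sq_abs (EE a x)] at expand
    nlinarith [sq_nonneg (|EE a x| * x ^ (-p/2) - x ^ (r+p/2))]

lemma KEY1C (a : ℕ → ℝ) {C : ℝ} (hC : 0 ≤ C)
    (hms : ∀ T ≥ (2:ℝ), M2 a T ≤ C * T ^ 2 * Real.log T ^ 22) {w : ℂ} (hw : w.re < -(3/2)) :
    IntegrableOn (fun x : ℝ => (EE a x : ℂ) * (x:ℂ) ^ w) (Ioi 1) := by
  apply (KEY1R a hC hms hw).mono'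
  · apply ContinuousOn.aestronglyMeasurable _ measurableSet_Ioi
    intro x hx
    have hx0 : (0:ℝ) < x := lt_trans one_pos hx
    exact ((Complex.continuous_ofReal.continuousAt.comp
      (EE_contAt a hx0.ne')).continuousWithinAt).mul
      ((cpow_contOn w).mono (fun y (hy : y ∈ Ioi (1:ℝ)) => Set.mem_Ioi.mpr (lt_trans one_pos hy)) x hx)
  · filter_upwards [ae_restrict_mem measurableSet_Ioi] with x hx
    have hx0 : (0:ℝ) < x := lt_trans one_pos hx
    rw [norm_mul, Complex.norm_real, Complex.norm_cpow_eq_rpow_re_of_pos hx0]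
    exact le_refl _

lemma KEY1L (a : ℕ → ℝ) {C : ℝ} (hC : 0 ≤ C)
    (hms : ∀ T ≥ (2:ℝ), M2 a T ≤ C * T ^ 2 * Real.log T ^ 22) {r : ℝ} (hr : r < -(3/2)) :
    IntegrableOn (fun x : ℝ => |EE a x| * Real.log x * x ^ r) (Ioi 1) := by
  set δ : ℝ := (-(3/2) - r)/2 with hδdef
  have hδ : 0 < δ := by simp only [hδdef]; linarith
  have hrδ : r + δ < -(3/2) := by simp only [hδdef]; linarith
  apply (((KEY1R a hC hms hrδ).const_mul (1/δ)).mono')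
  · apply ContinuousOn.aestronglyMeasurable _ measurableSet_Ioi
    intro x hx
    have hx0 : (0:ℝ) < x := lt_trans one_pos hx
    exact (((EE_contAt a hx0.ne').abs.continuousWithinAt).mul
      ((Real.continuousAt_log hx0.ne').continuousWithinAt)).mul
      ((rpow_contOn r).mono (fun y (hy : y ∈ Ioi (1:ℝ)) => Set.mem_Ioi.mpr (lt_trans one_pos hy)) x hx)
  · filter_upwards [ae_restrict_mem measurableSet_Ioi] with x hx
    have hx1 : (1:ℝ) ≤ x := le_of_lt hx
    have hx0 : (0:ℝ) < x := lt_trans one_pos hx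
    have hlog : Real.log x ≤ x ^ δ / δ := Real.log_le_rpow_div hx0.le hδ
    have hn : ‖|EE a x| * Real.log x * x ^ r‖ = |EE a x| * Real.log x * x ^ r := by
      rw [Real.norm_of_nonneg (mul_nonneg (mul_nonneg (abs_nonneg _)
        (Real.log_nonneg hx1)) (Real.rpow_nonneg hx0.le r))]
    rw [hn]
    have e1 : x ^ δ * x ^ r = x ^ (r + δ) := by rw [← Real.rpow_add hx0]; ring_nf
    calc |EE a x| * Real.log x * x ^ r ≤ |EE a x| * (x ^ δ / δ) * x ^ r := by
          apply mul_le_mul_of_nonneg_right _ (Real.rpow_nonneg hx0.le r)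
          exact mul_le_mul_of_nonneg_left hlog (abs_nonneg _)
      _ = 1/δ * (|EE a x| * x ^ (r + δ)) := by rw [← e1]; field_simp

lemma tPg_intInt (a : ℕ → ℝ) {u v : ℝ} (hu : 0 < u) (hv : 0 < v) :
    IntervalIntegrable (fun t : ℝ => t * Pg a (Real.log t)) volume u v := by
  apply ContinuousOn.intervalIntegrable
  intro x hx
  have hx0 : 0 < x := lt_of_lt_of_le (lt_min hu hv) hx.1
  have hPg : ContinuousAt (Pg a) (Real.log x) := by
    apply Continuous.continuousAt
    exact continuous_finset_sum _ (fun j _ => continuous_const.mul (continuous_pow j))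
  exact (continuousAt_id.mul (hPg.comp (Real.continuousAt_log hx0.ne'))).continuousWithinAt

lemma ZI_eq (a : ℕ → ℝ) (t : ℝ) : ZI t = t * Pg a (Real.log t) + EE a t := by
  simp [EE]

lemma ZI_bound (a : ℕ → ℝ) {C : ℝ} (hC : 0 ≤ C)
    (hms : ∀ T ≥ (2:ℝ), M2 a T ≤ C * T ^ 2 * Real.log T ^ 22) {ε : ℝ} (hε : 0 < ε) :
    ∃ D : ℝ, 0 < D ∧ ∀ y : ℝ, 1 ≤ y → ZI y ≤ D * y ^ (1 + ε) := by
  obtain ⟨D1, hD1pos, hD1⟩ := Pg_bound a hε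
  obtain ⟨D2, hD2pos, hD2⟩ := M2_bound a hC hms hε
  set K : ℝ := 2 ^ (1+ε) * (D1 + D2) with hKdef
  have hKpos : 0 < K := by
    have : (0:ℝ) < 2 ^ (1+ε) := Real.rpow_pos_of_pos two_pos _
    simp only [hKdef]; positivity
  refine ⟨K + 1, by linarith, fun y hy => ?_⟩
  have hy0 : (0:ℝ) < y := by linarith
  have h2y0 : (0:ℝ) < 2*y := by linarith
  have h2y1 : (1:ℝ) ≤ 2*y := by linarith
  have hyy : y ≤ 2*y := by linarith
  -- step 1 : y * ZI y ≤ ∫_y^{2y} ZI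
  have step1 : y * ZI y ≤ ∫ t in y..(2*y), ZI t := by
    have h1 : (∫ t in y..(2*y), ZI y) = y * ZI y := by
      rw [intervalIntegral.integral_const, smul_eq_mul]; ring
    rw [← h1]
    apply intervalIntegral.integral_mono_on hyy (intervalIntegrable_const)
      (ZI_cont.intervalIntegrable _ _)
    exact fun t ht => ZI_mono ht.1
  -- step 2 : split the integral
  have step2 : (∫ t in y..(2*y), ZI t)
      = (∫ t in y..(2*y), t * Pg a (Real.log t)) + ∫ t in y..(2*y), EE a t := by
    rw [← intervalIntegral.integral_add (tPg_intInt a hy0 h2y0) (EE_intInt a hy0 h2y0)]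
    apply intervalIntegral.integral_congr
    exact fun t _ => ZI_eq a t
  -- bound the polynomial part
  have boundA : (∫ t in y..(2*y), t * Pg a (Real.log t)) ≤ y * (2*y * (D1 * (2*y) ^ ε)) := by
    have h1 : (∫ t in y..(2*y), (2*y) * (D1 * (2*y) ^ ε)) = y * (2*y * (D1 * (2*y) ^ ε)) := by
      rw [intervalIntegral.integral_const, smul_eq_mul]; ring
    rw [← h1]
    apply intervalIntegral.integral_mono_on hyy (tPg_intInt a hy0 h2y0) intervalIntegrable_const
    intro t ht
    have ht1 : (1:ℝ) ≤ t := le_trans hy ht.1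
    have ht0 : (0:ℝ) < t := by linarith
    have h2 : Pg a (Real.log t) ≤ D1 * (2*y) ^ ε := by
      calc Pg a (Real.log t) ≤ |Pg a (Real.log t)| := le_abs_self _
        _ ≤ D1 * t ^ ε := hD1 t ht1
        _ ≤ D1 * (2*y) ^ ε := by
            apply mul_le_mul_of_nonneg_left _ hD1pos.le
            exact Real.rpow_le_rpow ht0.le ht.2 hε.le
    have h3 : (0:ℝ) ≤ D1 * (2*y) ^ ε := mul_nonneg hD1pos.le (Real.rpow_nonneg h2y0.le _)
    calc t * Pg a (Real.log t) ≤ t * (D1 * (2*y) ^ ε) := mul_le_mul_of_nonneg_left h2 ht0.le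
      _ ≤ 2*y * (D1 * (2*y) ^ ε) := mul_le_mul_of_nonneg_right ht.2 h3
  -- bound the EE part
  have boundB : (∫ t in y..(2*y), EE a t) ≤ (1/2) * (D2 * (2*y) ^ (2+ε)) + y/2 := by
    have hEEsq : (∫ t in y..(2*y), EE a t ^ 2) ≤ M2 a (2*y) := by
      have hsub : M2 a (2*y) - M2 a y = ∫ t in y..(2*y), EE a t ^ 2 :=
        intervalIntegral.integral_interval_sub_left (EEsq_intInt a one_pos h2y0)
          (EEsq_intInt a one_pos hy0)
      have := M2_nonneg a hy
      linarith
    have h1 : (∫ t in y..(2*y), EE a t) ≤ ∫ t in y..(2*y), (EE a t ^ 2 + 1)/2 := by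
      apply intervalIntegral.integral_mono_on hyy (EE_intInt a hy0 h2y0)
      · exact (((EEsq_intInt a hy0 h2y0).add (intervalIntegrable_const)).div_const 2)
      · intro t _; nlinarith [sq_nonneg (EE a t - 1)]
    have h2 : (∫ t in y..(2*y), (EE a t ^ 2 + 1)/2)
        = (1/2) * (∫ t in y..(2*y), EE a t ^ 2) + y/2 := by
      have : (∫ t in y..(2*y), (EE a t ^ 2 + 1)/2)
          = ∫ t in y..(2*y), ((1:ℝ)/2) * (EE a t ^ 2) + 1/2 := by
        apply intervalIntegral.integral_congr; intro t _; ring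
      rw [this, intervalIntegral.integral_add (((EEsq_intInt a hy0 h2y0).const_mul _))
        intervalIntegrable_const, intervalIntegral.integral_const_mul,
        intervalIntegral.integral_const, smul_eq_mul]
      ring
    have h3 : M2 a (2*y) ≤ D2 * (2*y) ^ (2+ε) := hD2 _ h2y1
    calc (∫ t in y..(2*y), EE a t) ≤ (1/2) * (∫ t in y..(2*y), EE a t ^ 2) + y/2 := by
          rw [← h2]; exact h1
      _ ≤ (1/2) * (D2 * (2*y) ^ (2+ε)) + y/2 := by nlinarith
  -- rpow algebra
  have e2y : ∀ q : ℝ, (2*y) ^ q = 2 ^ q * y ^ q := fun q => Real.mul_rpow (by norm_num) hy0.le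
  have ey2 : y * y ^ (1+ε) = y ^ (2+ε) := by
    nth_rewrite 1 [← Real.rpow_one y]
    rw [← Real.rpow_add hy0]; ring_nf
  have ey1 : y ^ (1:ℝ) = y := Real.rpow_one y
  have hy3 : y * y * y ^ ε = y ^ (2+ε) := by
    rw [show y * y * y ^ ε = y^(1:ℝ) * y^(1:ℝ) * y^ε by rw [ey1]]
    rw [← Real.rpow_add hy0, ← Real.rpow_add hy0]; ring_nf
  have eyy : y * (2*y * (D1 * (2*y) ^ ε)) = 2 ^ (1+ε) * D1 * y ^ (2+ε) := by
    rw [e2y ε]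
    have h2 : (2:ℝ) ^ (1+ε) = 2 * 2 ^ ε := by
      rw [Real.rpow_add two_pos, Real.rpow_one]
    rw [h2]
    calc y * (2*y*(D1*(2^ε*y^ε))) = 2*2^ε*D1*(y*y*y^ε) := by ring
      _ = 2*2^ε*D1*y^(2+ε) := by rw [hy3]
  have eyy2 : (1/2) * (D2 * (2*y) ^ (2+ε)) = 2 ^ (1+ε) * D2 * y ^ (2+ε) := by
    rw [e2y (2+ε)]
    have h2 : (2:ℝ) ^ ((2:ℝ)+ε) = 2 * 2 ^ (1+ε) := by
      rw [show (2:ℝ)+ε = 1 + (1+ε) by ring, Real.rpow_add two_pos, Real.rpow_one]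
    rw [h2]; ring
  -- combine
  have hyle : y/2 ≤ y ^ (2+ε) := by
    have : y ^ (1:ℝ) ≤ y ^ (2+ε) := Real.rpow_le_rpow_of_exponent_le hy (by linarith)
    rw [ey1] at this; linarith
  have total : y * ZI y ≤ (K + 1) * y ^ (2+ε) := by
    rw [step2] at step1
    calc y * ZI y ≤ y * (2*y * (D1 * (2*y) ^ ε)) + ((1/2) * (D2 * (2*y) ^ (2+ε)) + y/2) := by
          linarith
      _ = (2 ^ (1+ε) * D1 + 2 ^ (1+ε) * D2) * y ^ (2+ε) + y/2 := by rw [eyy, eyy2]; ring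
      _ ≤ (K + 1) * y ^ (2+ε) := by
          simp only [hKdef]; nlinarith [hyle]
  -- divide by y
  have hfinal : ZI y * y ≤ ((K+1) * y ^ (1+ε)) * y := by
    have he : (K+1) * y ^ (1+ε) * y = (K+1) * y ^ (2+ε) := by
      rw [mul_assoc, mul_comm (y ^ (1+ε)) y, ey2]
    rw [he]
    linarith [total]
  exact le_of_mul_le_mul_right hfinal hy0

lemma F1R (a : ℕ → ℝ) {C : ℝ} (hC : 0 ≤ C)
    (hms : ∀ T ≥ (2:ℝ), M2 a T ≤ C * T ^ 2 * Real.log T ^ 22) {r : ℝ} (hr : r < -1) :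
    IntegrableOn (fun x : ℝ => zf x * x ^ r) (Ioi 1) := by
  set ε : ℝ := (-1-r)/2 with hεdef
  have hε : 0 < ε := by simp only [hεdef]; linarith
  obtain ⟨D, hDpos, hD⟩ := ZI_bound a hC hms hε
  apply integrableOn_Ioi_of_bound _ ?_ ?_ (D + (-r) * (D / ε))
  · intro T hT
    have hT0 : (0:ℝ) < T := by linarith
    have hu : ∀ x ∈ uIcc (1:ℝ) T, HasDerivAt ZI (zf x) x := fun x _ => ZI_deriv x
    have hv : ∀ x ∈ uIcc (1:ℝ) T, HasDerivAt (fun x : ℝ => x ^ r) (r * x ^ (r - 1)) x := by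
      intro x hx
      rw [uIcc_of_le hT] at hx
      have hx0 : (0:ℝ) < x := by linarith [hx.1]
      exact Real.hasDerivAt_rpow_const (Or.inl hx0.ne')
    have hibp := intervalIntegral.integral_mul_deriv_eq_deriv_mul hu hv
      (zf_cont.intervalIntegrable _ _) (((rpow_intInt (p := r-1) one_pos hT0).const_mul r))
    have hsplit : (∫ x in (1:ℝ)..T, ZI x * (r * x ^ (r-1)))
        = r * ∫ x in (1:ℝ)..T, ZI x * x ^ (r-1) := by
      rw [← intervalIntegral.integral_const_mul]
      apply intervalIntegral.integral_congr
      intro x _; ring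
    have hmono : (∫ x in (1:ℝ)..T, ZI x * x ^ (r-1)) ≤ ∫ x in (1:ℝ)..T, D * x ^ (r+ε) := by
      apply intervalIntegral.integral_mono_on hT
      · apply ContinuousOn.intervalIntegrable
        intro x hx
        rw [uIcc_of_le hT] at hx
        have hx0 : (0:ℝ) < x := by linarith [hx.1]
        exact (ZI_cont.continuousAt.mul
          ((Real.continuousAt_rpow_const x (r-1) (Or.inl hx0.ne')))).continuousWithinAt
      · exact ((rpow_intInt one_pos hT0).const_mul D)
      · intro x hx
        have hx1 : (1:ℝ) ≤ x := hx.1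
        have hx0 : (0:ℝ) < x := by linarith
        have h2 : x ^ ((1:ℝ)+ε) * x ^ (r-1) = x ^ (r+ε) := by
          rw [← Real.rpow_add hx0]; ring_nf
        calc ZI x * x ^ (r-1) ≤ D * x ^ ((1:ℝ)+ε) * x ^ (r-1) :=
              mul_le_mul_of_nonneg_right (hD x hx1) (Real.rpow_nonneg hx0.le _)
          _ = D * x ^ (r+ε) := by rw [mul_assoc, h2]
    have hexp : r + ε + 1 = -ε := by simp only [hεdef]; ring
    have hint : (∫ x in (1:ℝ)..T, D * x ^ (r+ε)) = D * ((T ^ (-ε) - 1) / (-ε)) := by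
      rw [intervalIntegral.integral_const_mul, integral_rpow (by
        right
        constructor
        · intro h; rw [show r+ε = -1 ↔ r+ε+1 = 0 by constructor <;> intro <;> linarith] at h
          rw [hexp] at h; linarith
        · rw [uIcc_of_le hT]; intro h; linarith [h.1])]
      rw [show r + ε + 1 = -ε from hexp, Real.one_rpow]
    have ht1 : T ^ (-ε) ≤ 1 := Real.rpow_le_one_of_one_le_of_nonpos hT (by linarith)
    have ht0 : 0 ≤ T ^ (-ε) := Real.rpow_nonneg hT0.le _
    have hJ : (∫ x in (1:ℝ)..T, ZI x * x ^ (r-1)) ≤ D / ε := by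
      calc (∫ x in (1:ℝ)..T, ZI x * x ^ (r-1)) ≤ D * ((T ^ (-ε) - 1) / (-ε)) := by
            rw [← hint]; exact hmono
        _ = D * ((1 - T ^ (-ε)) / ε) := by
            congr 1
            rw [div_eq_div_iff (by linarith) (by linarith)]; ring
        _ ≤ D * (1 / ε) := by gcongr; linarith
        _ = D / ε := by ring
    have hbd1 : ZI T * T ^ r ≤ D := by
      have h2 : T ^ ((1:ℝ)+ε) * T ^ r = T ^ (-ε) := by
        rw [← Real.rpow_add hT0, ← hexp]; ring_nf
      calc ZI T * T ^ r ≤ D * T ^ ((1:ℝ)+ε) * T ^ r :=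
            mul_le_mul_of_nonneg_right (hD T hT) (Real.rpow_nonneg hT0.le _)
        _ = D * T ^ (-ε) := by rw [mul_assoc, h2]
        _ ≤ D := by nlinarith
    have hZI1 : 0 ≤ ZI 1 := ZI_nonneg one_pos.le
    have hT1r : ((1:ℝ)) ^ r = 1 := Real.one_rpow _
    rw [hsplit, hT1r] at hibp
    -- hibp : r * ∫ ZI x x^{r-1} = ZI T T^r - ZI 1 * 1 - ∫ zf x^r
    have hJ' : (-r) * (∫ x in (1:ℝ)..T, ZI x * x ^ (r-1)) ≤ (-r) * (D / ε) :=
      mul_le_mul_of_nonneg_left hJ (by linarith)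
    linarith
  · exact fun x hx => (zf_cont.continuousAt.mul
      (Real.continuousAt_rpow_const x r (Or.inl (ne_of_gt hx)))).continuousWithinAt
  · intro x hx
    exact mul_nonneg (zf_nonneg x) (Real.rpow_nonneg (by linarith) _)

lemma F1C (a : ℕ → ℝ) {C : ℝ} (hC : 0 ≤ C)
    (hms : ∀ T ≥ (2:ℝ), M2 a T ≤ C * T ^ 2 * Real.log T ^ 22) {w : ℂ} (hw : w.re < -1) :
    IntegrableOn (fun x : ℝ => (zf x : ℂ) * (x:ℂ) ^ w) (Ioi 1) := by
  apply (F1R a hC hms hw).mono'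
  · apply ContinuousOn.aestronglyMeasurable _ measurableSet_Ioi
    intro x hx
    have hx0 : (0:ℝ) < x := lt_trans one_pos hx
    exact ((Complex.continuous_ofReal.continuousAt.comp
      zf_cont.continuousAt).continuousWithinAt).mul
      ((cpow_contOn w).mono (fun y (hy : y ∈ Ioi (1:ℝ)) => Set.mem_Ioi.mpr (lt_trans one_pos hy)) x hx)
  · filter_upwards [ae_restrict_mem measurableSet_Ioi] with x hx
    have hx0 : (0:ℝ) < x := lt_trans one_pos hx
    rw [norm_mul, Complex.norm_real, Complex.norm_cpow_eq_rpow_re_of_pos hx0, Real.norm_of_nonneg (zf_nonneg x)]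

lemma ZIC (a : ℕ → ℝ) {C : ℝ} (hC : 0 ≤ C)
    (hms : ∀ T ≥ (2:ℝ), M2 a T ≤ C * T ^ 2 * Real.log T ^ 22) {w : ℂ} (hw : w.re < -2) :
    IntegrableOn (fun x : ℝ => (ZI x : ℂ) * (x:ℂ) ^ w) (Ioi 1) := by
  set ε : ℝ := (-2-w.re)/2 with hεdef
  have hε : 0 < ε := by simp only [hεdef]; linarith
  have hlt : 1 + ε + w.re < -1 := by simp only [hεdef]; linarith
  obtain ⟨D, hDpos, hD⟩ := ZI_bound a hC hms hε
  apply (((integrableOn_Ioi_rpow_of_lt hlt one_pos).const_mul D).mono')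
  · apply ContinuousOn.aestronglyMeasurable _ measurableSet_Ioi
    intro x hx
    have hx0 : (0:ℝ) < x := lt_trans one_pos hx
    exact ((Complex.continuous_ofReal.continuousAt.comp
      ZI_cont.continuousAt).continuousWithinAt).mul
      ((cpow_contOn w).mono (fun y (hy : y ∈ Ioi (1:ℝ)) => Set.mem_Ioi.mpr (lt_trans one_pos hy)) x hx)
  · filter_upwards [ae_restrict_mem measurableSet_Ioi] with x hx
    have hx1 : (1:ℝ) ≤ x := le_of_lt hx
    have hx0 : (0:ℝ) < x := lt_trans one_pos hx
    rw [norm_mul, Complex.norm_real, Complex.norm_cpow_eq_rpow_re_of_pos hx0, Real.norm_of_nonneg (ZI_nonneg hx0.le)]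
    have h2 : x ^ ((1:ℝ)+ε) * x ^ w.re = x ^ (1+ε+w.re) := by
      rw [← Real.rpow_add hx0]
    calc ZI x * x ^ w.re ≤ D * x ^ ((1:ℝ)+ε) * x ^ w.re :=
          mul_le_mul_of_nonneg_right (hD x hx1) (Real.rpow_nonneg hx0.le _)
      _ = D * x ^ (1+ε+w.re) := by rw [mul_assoc, h2]

lemma LIMB (a : ℕ → ℝ) {C : ℝ} (hC : 0 ≤ C)
    (hms : ∀ T ≥ (2:ℝ), M2 a T ≤ C * T ^ 2 * Real.log T ^ 22) {w : ℂ} (hw : w.re < -1) :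
    Tendsto (fun T : ℝ => (ZI T : ℂ) * (T:ℂ) ^ w) atTop (𝓝 0) := by
  set ε : ℝ := (-1-w.re)/2 with hεdef
  have hε : 0 < ε := by simp only [hεdef]; linarith
  obtain ⟨D, hDpos, hD⟩ := ZI_bound a hC hms hε
  apply squeeze_zero_norm' (a := fun T : ℝ => D * T ^ (-ε))
  · filter_upwards [eventually_ge_atTop (1:ℝ)] with T hT
    have hT0 : (0:ℝ) < T := by linarith
    rw [norm_mul, Complex.norm_real, Complex.norm_cpow_eq_rpow_re_of_pos hT0, Real.norm_of_nonneg (ZI_nonneg hT0.le)]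
    have h2 : T ^ ((1:ℝ)+ε) * T ^ w.re = T ^ (-ε) := by
      rw [← Real.rpow_add hT0]
      congr 1
      simp only [hεdef]; ring
    calc ZI T * T ^ w.re ≤ D * T ^ ((1:ℝ)+ε) * T ^ w.re :=
          mul_le_mul_of_nonneg_right (hD T hT) (Real.rpow_nonneg hT0.le _)
      _ = D * T ^ (-ε) := by rw [mul_assoc, h2]
  · rw [show (0:ℝ) = D * 0 by ring]
    exact (tendsto_rpow_neg_atTop hε).const_mul D

lemma LIML (m : ℕ) {w : ℂ} (hw : w.re < 0) :
    Tendsto (fun T : ℝ => ((Real.log T ^ m : ℝ) : ℂ) * (T:ℂ) ^ w) atTop (𝓝 0) := by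
  set ε : ℝ := -w.re/2 with hεdef
  have hε : 0 < ε := by simp only [hεdef]; linarith
  obtain ⟨D, hDpos, hD⟩ := logpow_bound m hε
  apply squeeze_zero_norm' (a := fun T : ℝ => D * T ^ (w.re + ε))
  · filter_upwards [eventually_ge_atTop (1:ℝ)] with T hT
    have hT0 : (0:ℝ) < T := by linarith
    rw [norm_mul, Complex.norm_real, Complex.norm_cpow_eq_rpow_re_of_pos hT0,
      Real.norm_of_nonneg (pow_nonneg (Real.log_nonneg hT) m)]
    have h2 : T ^ ε * T ^ w.re = T ^ (w.re + ε) := by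
      rw [← Real.rpow_add hT0]; ring_nf
    calc Real.log T ^ m * T ^ w.re ≤ D * T ^ ε * T ^ w.re :=
          mul_le_mul_of_nonneg_right (hD T hT) (Real.rpow_nonneg hT0.le _)
      _ = D * T ^ (w.re + ε) := by rw [mul_assoc, h2]
  · rw [show (0:ℝ) = D * 0 by ring]
    have : w.re + ε = -ε := by simp only [hεdef]; ring
    rw [this]
    exact (tendsto_rpow_neg_atTop hε).const_mul D

lemma LOGINTC (n : ℕ) {w : ℂ} (hw : w.re < -1) :
    IntegrableOn (fun x : ℝ => ((Real.log x ^ n : ℝ) : ℂ) * (x:ℂ) ^ w) (Ioi 1) := by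
  set ε : ℝ := (-1-w.re)/2 with hεdef
  have hε : 0 < ε := by simp only [hεdef]; linarith
  have hlt : ε + w.re < -1 := by simp only [hεdef]; linarith
  obtain ⟨D, hDpos, hD⟩ := logpow_bound n hε
  apply (((integrableOn_Ioi_rpow_of_lt hlt one_pos).const_mul D).mono')
  · apply ContinuousOn.aestronglyMeasurable _ measurableSet_Ioi
    intro x hx
    have hx0 : (0:ℝ) < x := lt_trans one_pos hx
    exact ((Complex.continuous_ofReal.continuousAt.comp
      (((Real.continuousAt_log hx0.ne').pow n))).continuousWithinAt).mul
      ((cpow_contOn w).mono (fun y (hy : y ∈ Ioi (1:ℝ)) => Set.mem_Ioi.mpr (lt_trans one_pos hy)) x hx)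
  · filter_upwards [ae_restrict_mem measurableSet_Ioi] with x hx
    have hx1 : (1:ℝ) ≤ x := le_of_lt hx
    have hx0 : (0:ℝ) < x := lt_trans one_pos hx
    rw [norm_mul, Complex.norm_real, Complex.norm_cpow_eq_rpow_re_of_pos hx0,
      Real.norm_of_nonneg (pow_nonneg (Real.log_nonneg hx1) n)]
    have h2 : x ^ ε * x ^ w.re = x ^ (ε + w.re) := by rw [← Real.rpow_add hx0]
    calc Real.log x ^ n * x ^ w.re ≤ D * x ^ ε * x ^ w.re :=
          mul_le_mul_of_nonneg_right (hD x hx1) (Real.rpow_nonneg hx0.le _)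
      _ = D * x ^ (ε + w.re) := by rw [mul_assoc, h2]

lemma J0 {s : ℂ} (hs : 1 < s.re) :
    (∫ x in Ioi (1:ℝ), (x:ℂ) ^ (-s)) = 1 / (s - 1) := by
  have hs1 : s ≠ 1 := by intro h; rw [h] at hs; simp at hs
  have hs1' : (1:ℂ) - s ≠ 0 := by
    intro h; apply hs1; have := congrArg (· + s) h; simpa using this.symm
  have hint : IntegrableOn (fun x : ℝ => (x:ℂ) ^ (-s)) (Ioi 1) := by
    have := LOGINTC 0 (w := -s) (by simp; linarith)
    simpa using this
  have hlim := MeasureTheory.intervalIntegral_tendsto_integral_Ioi 1 hint tendsto_id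
  have heval : ∀ᶠ T in atTop, (∫ x in (1:ℝ)..T, (x:ℂ) ^ (-s))
      = ((T:ℂ) ^ (1-s) - 1) / (1-s) := by
    filter_upwards [eventually_ge_atTop (1:ℝ)] with T hT
    rw [integral_cpow (by
      right
      exact ⟨by intro h; apply hs1; have := congrArg Neg.neg h; simpa using this,
        by rw [uIcc_of_le hT]; intro h; linarith [h.1]⟩)]
    rw [show -s + 1 = 1 - s by ring]
    norm_num
  have hlim2 : Tendsto (fun T : ℝ => ((T:ℂ) ^ (1-s) - 1) / (1-s)) atTop
      (𝓝 ((0 - 1)/(1-s))) := by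
    apply Tendsto.div_const
    apply Tendsto.sub_const
    have := LIML 0 (w := 1-s) (by simp; linarith)
    simpa using this
  have := tendsto_nhds_unique (hlim.congr' heval) hlim2
  rw [this]
  rw [div_eq_div_iff hs1' (by intro h; apply hs1; have := congrArg (· + 1) h; simpa using this)]
  ring

lemma LOGID (n : ℕ) {s : ℂ} (hs : 1 < s.re) :
    (∫ x in Ioi (1:ℝ), ((Real.log x ^ n : ℝ):ℂ) * (x:ℂ) ^ (-s))
      = (Nat.factorial n : ℂ) / (s - 1) ^ (n+1) := by
  have hs1 : s ≠ 1 := by intro h; rw [h] at hs; simp at hs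
  have hsub : (s:ℂ) - 1 ≠ 0 := by
    intro h; apply hs1; have := congrArg (· + 1) h; simpa using this
  have hs1' : (1:ℂ) - s ≠ 0 := by
    intro h; apply hs1; have := congrArg (· + s) h; simpa using this.symm
  induction n with
  | zero =>
    simp only [pow_zero, Nat.factorial_zero]
    rw [show ((1:ℝ):ℂ) = 1 by norm_num]
    simp only [one_mul, Nat.cast_one, zero_add, pow_one]
    exact J0 hs
  | succ n ih =>
    -- integration by parts on [1,T]
    have key : ∀ T : ℝ, 1 ≤ T →
        (∫ x in (1:ℝ)..T, ((Real.log x ^ (n+1) : ℝ):ℂ) * (x:ℂ) ^ (-s))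
          = ((Real.log T ^ (n+1) : ℝ):ℂ) * ((T:ℂ) ^ (1-s)/(1-s))
            - ((n+1 : ℂ)/(1-s)) * ∫ x in (1:ℝ)..T, ((Real.log x ^ n : ℝ):ℂ) * (x:ℂ) ^ (-s) := by
      intro T hT
      have hT0 : (0:ℝ) < T := by linarith
      have hu : ∀ x ∈ uIcc (1:ℝ) T,
          HasDerivAt (fun x : ℝ => ((Real.log x ^ (n+1) : ℝ):ℂ))
            (((n+1) * Real.log x ^ n * x⁻¹ : ℝ):ℂ) x := by
        intro x hx
        rw [uIcc_of_le hT] at hx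
        have hx0 : (0:ℝ) < x := by linarith [hx.1]
        have h1 : HasDerivAt (fun x : ℝ => Real.log x ^ (n+1))
            ((n+1) * Real.log x ^ n * x⁻¹) x := by
          have := ((Real.hasDerivAt_log hx0.ne').fun_pow (n+1))
          simpa using this
        exact h1.ofReal_comp
      have hv : ∀ x ∈ uIcc (1:ℝ) T,
          HasDerivAt (fun x : ℝ => (x:ℂ) ^ (1-s)/(1-s)) ((x:ℂ) ^ (-s)) x := by
        intro x hx
        rw [uIcc_of_le hT] at hx
        have hx0 : (0:ℝ) < x := by linarith [hx.1]
        have := hasDerivAt_ofReal_cpow_const' hx0.ne' (r := -s)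
          (by intro h; apply hs1; have := congrArg Neg.neg h; simpa using this)
        simpa [show -s + 1 = 1 - s by ring] using this
      have hucont : ContinuousOn (fun x : ℝ => ((n+1) * Real.log x ^ n * x⁻¹ : ℝ)) (uIcc 1 T) := by
        rw [uIcc_of_le hT]
        intro x hx
        have hx0 : (0:ℝ) < x := by linarith [hx.1]
        exact ContinuousAt.continuousWithinAt
          ((continuousAt_const.mul ((Real.continuousAt_log hx0.ne').pow n)).mul
            (continuousAt_inv₀ hx0.ne'))
      have hu' : IntervalIntegrable (fun x : ℝ => (((n+1) * Real.log x ^ n * x⁻¹ : ℝ):ℂ))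
          volume 1 T := by
        apply ContinuousOn.intervalIntegrable
        exact Complex.continuous_ofReal.comp_continuousOn hucont
      have hv' : IntervalIntegrable (fun x : ℝ => (x:ℂ) ^ (-s)) volume 1 T := by
        apply ContinuousOn.intervalIntegrable
        rw [uIcc_of_le hT]
        exact (cpow_contOn (-s)).mono (fun y hy => by
          have : (1:ℝ) ≤ y := hy.1; simp only [Set.mem_Ioi]; linarith)
      have hibp := intervalIntegral.integral_mul_deriv_eq_deriv_mul hu hv hu' hv'
      -- simplify the RHS integral
      have hcongr : (∫ x in (1:ℝ)..T, (((n+1) * Real.log x ^ n * x⁻¹ : ℝ):ℂ) * ((x:ℂ) ^ (1-s)/(1-s)))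
          = ((n+1:ℂ)/(1-s)) * ∫ x in (1:ℝ)..T, ((Real.log x ^ n : ℝ):ℂ) * (x:ℂ) ^ (-s) := by
        rw [← intervalIntegral.integral_const_mul]
        apply intervalIntegral.integral_congr
        intro x hx
        rw [uIcc_of_le hT] at hx
        have hx0 : (0:ℝ) < x := by linarith [hx.1]
        have hxne : (x:ℂ) ≠ 0 := by
          simp only [ne_eq, Complex.ofReal_eq_zero]; linarith
        have hsplit : (x:ℂ) ^ (1-s) = (x:ℂ) * (x:ℂ) ^ (-s) := by
          rw [show (1:ℂ) - s = 1 + (-s) by ring, Complex.cpow_add _ _ hxne, Complex.cpow_one]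
        simp only [hsplit]
        push_cast
        field_simp
      rw [hcongr] at hibp
      have hlog1 : ((Real.log 1 ^ (n+1) : ℝ):ℂ) = 0 := by
        simp [Real.log_one]
      rw [hlog1] at hibp
      rw [hibp]
      ring
    -- limits
    have hintn : IntegrableOn (fun x : ℝ => ((Real.log x ^ n : ℝ):ℂ) * (x:ℂ) ^ (-s)) (Ioi 1) :=
      LOGINTC n (w := -s) (by simp; linarith)
    have hintn1 : IntegrableOn (fun x : ℝ => ((Real.log x ^ (n+1) : ℝ):ℂ) * (x:ℂ) ^ (-s)) (Ioi 1) :=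
      LOGINTC (n+1) (w := -s) (by simp; linarith)
    have hlimL := MeasureTheory.intervalIntegral_tendsto_integral_Ioi 1 hintn1 tendsto_id
    have hlimR : Tendsto (fun T : ℝ =>
        ((Real.log T ^ (n+1) : ℝ):ℂ) * ((T:ℂ) ^ (1-s)/(1-s))
          - ((n+1 : ℂ)/(1-s)) * ∫ x in (1:ℝ)..T, ((Real.log x ^ n : ℝ):ℂ) * (x:ℂ) ^ (-s)) atTop
        (𝓝 (0 - ((n+1 : ℂ)/(1-s)) * ∫ x in Ioi (1:ℝ), ((Real.log x ^ n : ℝ):ℂ) * (x:ℂ) ^ (-s))) := by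
      apply Tendsto.sub
      · have h1 := LIML (n+1) (w := 1-s) (by simp; linarith)
        have h2 := h1.div_const (1-s)
        rw [zero_div] at h2
        simpa [mul_div_assoc] using h2
      · exact (MeasureTheory.intervalIntegral_tendsto_integral_Ioi 1 hintn tendsto_id).const_mul _
    have heq := tendsto_nhds_unique (hlimL.congr'
      (by filter_upwards [eventually_ge_atTop (1:ℝ)] with T hT; simpa using key T hT)) hlimR
    rw [heq, ih, zero_sub, Nat.factorial_succ]
    have hpow : (s - 1) ^ (n+1+1) = (s-1) * (s-1)^(n+1) := by ring
    rw [hpow, show (1:ℂ) - s = -(s-1) by ring]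
    push_cast
    field_simp

lemma IBPC (a : ℕ → ℝ) {C : ℝ} (hC : 0 ≤ C)
    (hms : ∀ T ≥ (2:ℝ), M2 a T ≤ C * T ^ 2 * Real.log T ^ 22) {s : ℂ} (hs : 1 < s.re) :
    (∫ x in Ioi (1:ℝ), (zf x : ℂ) * (x:ℂ) ^ (-s))
      = -((ZI 1 : ℝ):ℂ) + s * ∫ x in Ioi (1:ℝ), ((ZI x : ℝ):ℂ) * (x:ℂ) ^ (-s-1) := by
  have hs0 : s ≠ 0 := by
    intro h; rw [h] at hs; simp only [Complex.zero_re] at hs; linarith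
  have key : ∀ T : ℝ, 1 ≤ T →
      (∫ x in (1:ℝ)..T, (zf x : ℂ) * (x:ℂ) ^ (-s))
        = ((ZI T : ℝ):ℂ) * (T:ℂ) ^ (-s) - ((ZI 1 : ℝ):ℂ)
          + s * ∫ x in (1:ℝ)..T, ((ZI x : ℝ):ℂ) * (x:ℂ) ^ (-s-1) := by
    intro T hT
    have hT0 : (0:ℝ) < T := by linarith
    have hu : ∀ x ∈ uIcc (1:ℝ) T, HasDerivAt (fun x : ℝ => ((ZI x : ℝ):ℂ)) ((zf x : ℝ):ℂ) x :=
      fun x _ => (ZI_deriv x).ofReal_comp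
    have hv : ∀ x ∈ uIcc (1:ℝ) T,
        HasDerivAt (fun x : ℝ => (x:ℂ) ^ (-s) / (-s)) ((x:ℂ) ^ (-s-1)) x := by
      intro x hx
      rw [uIcc_of_le hT] at hx
      have hx0 : (0:ℝ) < x := by linarith [hx.1]
      have := hasDerivAt_ofReal_cpow_const' hx0.ne' (r := -s-1)
        (by intro h; apply hs0; have := congrArg (· + 1) h; simpa using this)
      simpa [show -s - 1 + 1 = -s by ring] using this
    have hu' : IntervalIntegrable (fun x : ℝ => ((zf x : ℝ):ℂ)) volume 1 T :=
      (Complex.continuous_ofReal.comp zf_cont).intervalIntegrable 1 T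
    have hv' : IntervalIntegrable (fun x : ℝ => (x:ℂ) ^ (-s-1)) volume 1 T := by
      apply ContinuousOn.intervalIntegrable
      rw [uIcc_of_le hT]
      exact (cpow_contOn (-s-1)).mono (fun y hy => by
        have : (1:ℝ) ≤ y := hy.1; simp only [Set.mem_Ioi]; linarith)
    have hibp := intervalIntegral.integral_mul_deriv_eq_deriv_mul hu hv hu' hv'
    -- hibp : ∫ ZI x * x^{-s-1} = ZI T * (T^{-s}/(-s)) - ZI 1 * (1^{-s}/(-s)) - ∫ zf x * (x^{-s}/(-s))
    have hc : (∫ x in (1:ℝ)..T, ((zf x : ℝ):ℂ) * ((x:ℂ) ^ (-s) / (-s)))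
        = (1/(-s)) * ∫ x in (1:ℝ)..T, ((zf x : ℝ):ℂ) * (x:ℂ) ^ (-s) := by
      rw [← intervalIntegral.integral_const_mul]
      apply intervalIntegral.integral_congr
      intro x _
      ring
    rw [hc, Complex.ofReal_one, Complex.one_cpow] at hibp
    field_simp [hs0] at hibp
    linear_combination -hibp
  have hintL : IntegrableOn (fun x : ℝ => (zf x : ℂ) * (x:ℂ) ^ (-s)) (Ioi 1) :=
    F1C a hC hms (w := -s) (by simp; linarith)
  have hintR : IntegrableOn (fun x : ℝ => ((ZI x : ℝ):ℂ) * (x:ℂ) ^ (-s-1)) (Ioi 1) :=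
    ZIC a hC hms (w := -s-1) (by simp; linarith)
  have hlimL := MeasureTheory.intervalIntegral_tendsto_integral_Ioi 1 hintL tendsto_id
  have hlimR : Tendsto (fun T : ℝ =>
      ((ZI T : ℝ):ℂ) * (T:ℂ) ^ (-s) - ((ZI 1 : ℝ):ℂ)
        + s * ∫ x in (1:ℝ)..T, ((ZI x : ℝ):ℂ) * (x:ℂ) ^ (-s-1)) atTop
      (𝓝 (0 - ((ZI 1 : ℝ):ℂ) + s * ∫ x in Ioi (1:ℝ), ((ZI x : ℝ):ℂ) * (x:ℂ) ^ (-s-1))) := by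
    apply Tendsto.add
    · apply Tendsto.sub_const
      exact LIMB a hC hms (w := -s) (by simp; linarith)
    · exact (MeasureTheory.intervalIntegral_tendsto_integral_Ioi 1 hintR tendsto_id).const_mul _
  have heq := tendsto_nhds_unique (hlimL.congr'
    (by filter_upwards [eventually_ge_atTop (1:ℝ)] with T hT; simpa using key T hT)) hlimR
  rw [heq]
  ring

lemma SPLITC (a : ℕ → ℝ) {C : ℝ} (hC : 0 ≤ C)
    (hms : ∀ T ≥ (2:ℝ), M2 a T ≤ C * T ^ 2 * Real.log T ^ 22) {s : ℂ} (hs : 1 < s.re) :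
    (∫ x in Ioi (1:ℝ), ((ZI x : ℝ):ℂ) * (x:ℂ) ^ (-s-1))
      = (∑ j ∈ Finset.range 5, (a j : ℂ) * ((Nat.factorial j : ℂ) / (s-1) ^ (j+1)))
        + ∫ x in Ioi (1:ℝ), ((EE a x : ℝ):ℂ) * (x:ℂ) ^ (-s-1) := by
  have hw : (-s).re < -1 := by simp; linarith
  have hEq : EqOn (fun x : ℝ => ((ZI x : ℝ):ℂ) * (x:ℂ) ^ (-s-1))
      (fun x : ℝ => (∑ j ∈ Finset.range 5, (a j : ℂ) * (((Real.log x ^ j : ℝ):ℂ) * (x:ℂ) ^ (-s)))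
        + ((EE a x : ℝ):ℂ) * (x:ℂ) ^ (-s-1)) (Ioi 1) := by
    intro x hx
    have hx0 : (0:ℝ) < x := lt_trans one_pos hx
    have hxne : (x:ℂ) ≠ 0 := by simp only [ne_eq, Complex.ofReal_eq_zero]; linarith
    have hcx : (x:ℂ) * (x:ℂ) ^ (-s-1) = (x:ℂ) ^ (-s) := by
      have h := Complex.cpow_add (-s-1) (1:ℂ) hxne
      rw [show (-s-1) + (1:ℂ) = -s by ring, Complex.cpow_one] at h
      rw [mul_comm]; exact h.symm
    simp only
    rw [ZI_eq a x]
    push_cast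
    rw [Pg]
    push_cast
    rw [add_mul, Finset.mul_sum, Finset.sum_mul]
    congr 1
    apply Finset.sum_congr rfl
    intro j _
    rw [← hcx]
    ring
  rw [MeasureTheory.setIntegral_congr_fun measurableSet_Ioi hEq]
  have hint1 : ∀ j ∈ Finset.range 5, IntegrableOn
      (fun x : ℝ => (a j : ℂ) * (((Real.log x ^ j : ℝ):ℂ) * (x:ℂ) ^ (-s))) (Ioi 1) :=
    fun j _ => (LOGINTC j hw).const_mul _
  have hintsum : IntegrableOn
      (fun x : ℝ => ∑ j ∈ Finset.range 5, (a j : ℂ) * (((Real.log x ^ j : ℝ):ℂ) * (x:ℂ) ^ (-s)))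
      (Ioi 1) := by
    apply MeasureTheory.integrable_finset_sum
    exact hint1
  have hint2 : IntegrableOn (fun x : ℝ => ((EE a x : ℝ):ℂ) * (x:ℂ) ^ (-s-1)) (Ioi 1) :=
    KEY1C a hC hms (w := -s-1) (by simp; linarith)
  rw [MeasureTheory.integral_add hintsum hint2]
  congr 1
  rw [MeasureTheory.integral_finset_sum _ hint1]
  apply Finset.sum_congr rfl
  intro j _
  rw [MeasureTheory.integral_const_mul, LOGID j hs]

lemma cpow_param_deriv {x : ℝ} (hx : 0 < x) (s : ℂ) :
    HasDerivAt (fun s : ℂ => (x:ℂ) ^ (-s-1)) (-((Real.log x : ℝ):ℂ) * (x:ℂ) ^ (-s-1)) s := by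
  have hxne : (x:ℂ) ≠ 0 := by simp only [ne_eq, Complex.ofReal_eq_zero]; linarith
  have hL : ((Real.log x : ℝ):ℂ) = Complex.log (x:ℂ) := Complex.ofReal_log hx.le
  have h1 : ∀ w : ℂ, (x:ℂ) ^ w = Complex.exp (Complex.log (x:ℂ) * w) := fun w =>
    Complex.cpow_def_of_ne_zero hxne w
  have hg : HasDerivAt (fun s : ℂ => Complex.log (x:ℂ) * (-s-1)) (-Complex.log (x:ℂ)) s := by
    have h2 : HasDerivAt (fun s : ℂ => -s-1) (-1 : ℂ) s := by
      simpa using ((hasDerivAt_id s).neg.sub_const 1)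
    have := h2.const_mul (Complex.log (x:ℂ))
    simpa [mul_comm] using this
  have h3 := hg.cexp
  have h4 : (fun s : ℂ => Complex.exp (Complex.log (x:ℂ) * (-s-1))) = fun s : ℂ => (x:ℂ) ^ (-s-1) := by
    funext w; rw [← h1]
  rw [h4] at h3
  refine h3.congr_deriv ?_
  rw [← h1, hL]
  ring

lemma FDIFF (a : ℕ → ℝ) {C : ℝ} (hC : 0 ≤ C)
    (hms : ∀ T ≥ (2:ℝ), M2 a T ≤ C * T ^ 2 * Real.log T ^ 22) {s₀ : ℂ} (h : 1/2 < s₀.re) :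
    DifferentiableAt ℂ (fun s : ℂ => ∫ x in Ioi (1:ℝ), ((EE a x : ℝ):ℂ) * (x:ℂ) ^ (-s-1)) s₀ := by
  set ε : ℝ := (s₀.re - 1/2)/2 with hεdef
  have hε : 0 < ε := by simp only [hεdef]; linarith
  set r₀ : ℝ := -(s₀.re - ε) - 1 with hr₀def
  have hr₀ : r₀ < -(3/2) := by simp only [hr₀def, hεdef]; linarith
  have hmeas : ∀ s : ℂ, AEStronglyMeasurable (fun x : ℝ => ((EE a x : ℝ):ℂ) * (x:ℂ) ^ (-s-1))
      (volume.restrict (Ioi 1)) := by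
    intro s
    apply ContinuousOn.aestronglyMeasurable _ measurableSet_Ioi
    intro x hx
    have hx0 : (0:ℝ) < x := lt_trans one_pos hx
    exact ((Complex.continuous_ofReal.continuousAt.comp
      (EE_contAt a hx0.ne')).continuousWithinAt).mul
      ((cpow_contOn (-s-1)).mono (fun y (hy : y ∈ Ioi (1:ℝ)) => Set.mem_Ioi.mpr (lt_trans one_pos hy)) x hx)
  have key := hasDerivAt_integral_of_dominated_loc_of_deriv_le (μ := volume.restrict (Ioi 1))
    (F := fun (s : ℂ) (x : ℝ) => ((EE a x : ℝ):ℂ) * (x:ℂ) ^ (-s-1))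
    (F' := fun (s : ℂ) (x : ℝ) => ((EE a x : ℝ):ℂ) * (-((Real.log x : ℝ):ℂ) * (x:ℂ) ^ (-s-1)))
    (x₀ := s₀) (bound := fun x : ℝ => |EE a x| * Real.log x * x ^ r₀)
    (Metric.ball_mem_nhds s₀ hε) (Eventually.of_forall hmeas) (KEY1C a hC hms (w := -s₀-1) (by simp; linarith)) ?_ ?_ ?_ ?_
  · exact key.2.differentiableAt
  · -- measurability of F' s₀
    apply ContinuousOn.aestronglyMeasurable _ measurableSet_Ioi
    intro x hx
    have hx0 : (0:ℝ) < x := lt_trans one_pos hx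
    apply ContinuousWithinAt.mul
    · exact (Complex.continuous_ofReal.continuousAt.comp (EE_contAt a hx0.ne')).continuousWithinAt
    · apply ContinuousWithinAt.mul
      · exact ((Complex.continuous_ofReal.continuousAt.comp
          (Real.continuousAt_log hx0.ne')).neg).continuousWithinAt
      · exact (cpow_contOn (-s₀-1)).mono (fun y (hy : y ∈ Ioi (1:ℝ)) => Set.mem_Ioi.mpr (lt_trans one_pos hy)) x hx
  · -- bound
    filter_upwards [ae_restrict_mem measurableSet_Ioi] with x hx
    intro s hsball
    have hx1 : (1:ℝ) ≤ x := le_of_lt hx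
    have hx0 : (0:ℝ) < x := lt_trans one_pos hx
    have hre : s₀.re - ε ≤ s.re := by
      have h1 : ‖s - s₀‖ < ε := mem_ball_iff_norm.mp hsball
      have h2 := Complex.abs_re_le_norm (s - s₀)
      have h3 : |(s - s₀).re| = |s.re - s₀.re| := by rw [Complex.sub_re]
      rw [h3] at h2
      have := abs_le.mp (le_of_lt (lt_of_le_of_lt h2 h1))
      linarith [this.1]
    rw [norm_mul, norm_mul, norm_neg, Complex.norm_real, Complex.norm_real,
      Complex.norm_cpow_eq_rpow_re_of_pos hx0,
      Real.norm_of_nonneg (Real.log_nonneg hx1)]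
    have hexp : (-s-1).re ≤ r₀ := by
      simp only [hr₀def, Complex.sub_re, Complex.neg_re, Complex.one_re]
      linarith
    have hrpow : x ^ (-s-1).re ≤ x ^ r₀ := Real.rpow_le_rpow_of_exponent_le hx1 hexp
    calc ‖(EE a x : ℝ)‖ * (Real.log x * x ^ (-s-1).re)
        ≤ ‖(EE a x : ℝ)‖ * (Real.log x * x ^ r₀) := by
          apply mul_le_mul_of_nonneg_left _ (norm_nonneg _)
          exact mul_le_mul_of_nonneg_left hrpow (Real.log_nonneg hx1)
      _ = |EE a x| * Real.log x * x ^ r₀ := by rw [Real.norm_eq_abs]; ring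
  · exact KEY1L a hC hms hr₀
  · -- differentiability
    filter_upwards [ae_restrict_mem measurableSet_Ioi] with x hx
    intro s _
    have hx0 : (0:ℝ) < x := lt_trans one_pos hx
    exact (cpow_param_deriv hx0 s).const_mul _

set_option maxHeartbeats 1000000 in
theorem stmt12 (a : ℕ → ℝ)
    (E2 : ℝ → ℝ)
    (hE2 : ∀ T : ℝ, E2 T =
      (∫ t in (0:ℝ)..T, ‖riemannZeta (1/2 + t * Complex.I)‖ ^ 4) -
        T * ∑ j ∈ Finset.range 5, a j * Real.log T ^ j)
    (hms : ∃ C : ℝ, ∀ T ≥ (2:ℝ), (∫ t in (1:ℝ)..T, (E2 t) ^ 2) ≤ C * T ^ 2 * Real.log T ^ 22) :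
    (∀ s : ℂ, 1/2 < s.re →
      IntegrableOn (fun x : ℝ => (E2 x : ℂ) * (x:ℂ) ^ (-s - 1)) (Ioi (1:ℝ))) ∧
    DifferentiableOn ℂ
      (fun s : ℂ =>
        ((Nat.factorial 4 * a 4 : ℝ) : ℂ) / (s - 1) ^ 5 +
        (∑ j ∈ Finset.range 4,
          ((a j * Nat.factorial j + a (j+1) * Nat.factorial (j+1) : ℝ) : ℂ) / (s - 1) ^ (j+1)) -
        (E2 1 : ℂ) + s * ∫ x in Ioi (1:ℝ), (E2 x : ℂ) * (x:ℂ) ^ (-s - 1))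
      {s : ℂ | 1/2 < s.re ∧ s ≠ 1} ∧
    (∀ s : ℂ, 1 < s.re →
      (((Nat.factorial 4 * a 4 : ℝ) : ℂ) / (s - 1) ^ 5 +
        (∑ j ∈ Finset.range 4,
          ((a j * Nat.factorial j + a (j+1) * Nat.factorial (j+1) : ℝ) : ℂ) / (s - 1) ^ (j+1)) -
        (E2 1 : ℂ) + s * ∫ x in Ioi (1:ℝ), (E2 x : ℂ) * (x:ℂ) ^ (-s - 1)) =
      ∫ x in Ioi (1:ℝ),
        (‖riemannZeta (1/2 + x * Complex.I)‖ ^ 4 : ℂ) * (x:ℂ) ^ (-s)) := by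
  have hEEeq : E2 = EE a := by
    funext T
    rw [hE2 T]
    rfl
  obtain ⟨C0, hms0⟩ := hms
  set C : ℝ := max C0 0 with hCdef
  have hC : 0 ≤ C := le_max_right _ _
  have hmsE : ∀ T ≥ (2:ℝ), M2 a T ≤ C * T ^ 2 * Real.log T ^ 22 := by
    intro T hT
    have h1 : M2 a T = ∫ t in (1:ℝ)..T, (E2 t) ^ 2 := by rw [hEEeq]; rfl
    rw [h1]
    refine le_trans (hms0 T hT) ?_
    have hlog : (0:ℝ) ≤ Real.log T ^ 22 := by positivity
    have hT2 : (0:ℝ) ≤ T ^ 2 := sq_nonneg T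
    have : C0 * T ^ 2 ≤ C * T ^ 2 :=
      mul_le_mul_of_nonneg_right (le_max_left C0 0) hT2
    exact mul_le_mul_of_nonneg_right this hlog
  rw [hEEeq]
  refine ⟨?_, ?_, ?_⟩
  · intro s hs
    exact KEY1C a hC hmsE (w := -s-1) (by simp; linarith)
  · -- differentiability
    intro s hsmem
    obtain ⟨hsre, hs1⟩ := hsmem
    apply DifferentiableAt.differentiableWithinAt
    have hsub : (s:ℂ) - 1 ≠ 0 := sub_ne_zero.mpr hs1
    have hA : DifferentiableAt ℂ (fun s : ℂ => ((Nat.factorial 4 * a 4 : ℝ) : ℂ) / (s - 1) ^ 5) s := by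
      apply DifferentiableAt.div (differentiableAt_const _)
      · exact (differentiableAt_id.sub (differentiableAt_const 1)).pow 5
      · exact pow_ne_zero _ hsub
    have hB : DifferentiableAt ℂ (fun s : ℂ => ∑ j ∈ Finset.range 4,
        ((a j * Nat.factorial j + a (j+1) * Nat.factorial (j+1) : ℝ) : ℂ) / (s - 1) ^ (j+1)) s := by
      apply DifferentiableAt.fun_sum
      intro j _
      apply DifferentiableAt.div (differentiableAt_const _)
      · exact (differentiableAt_id.sub (differentiableAt_const 1)).pow (j+1)
      · exact pow_ne_zero _ hsub
    have hD : DifferentiableAt ℂ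
        (fun s : ℂ => s * ∫ x in Ioi (1:ℝ), ((EE a x : ℝ):ℂ) * (x:ℂ) ^ (-s - 1)) s :=
      differentiableAt_id.mul (FDIFF a hC hmsE hsre)
    exact ((hA.add hB).sub (differentiableAt_const _)).add hD
  · -- the identity
    intro s hs
    have hsub : (s:ℂ) - 1 ≠ 0 := by
      intro h
      have : s = 1 := by linear_combination h
      rw [this] at hs; simp at hs
    have hr : (∫ x in Ioi (1:ℝ), (‖riemannZeta (1/2 + x * Complex.I)‖ ^ 4 : ℂ) * (x:ℂ) ^ (-s))
        = ∫ x in Ioi (1:ℝ), ((zf x : ℝ):ℂ) * (x:ℂ) ^ (-s) := by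
      apply MeasureTheory.integral_congr_ae
      apply Filter.Eventually.of_forall
      intro x
      unfold zf
      push_cast
      ring
    rw [hr, IBPC a hC hmsE hs, SPLITC a hC hmsE hs]
    have hZI1 : ZI 1 = EE a 1 + a 0 := by
      have h1 := ZI_eq a 1
      rw [Real.log_one] at h1
      have h2 : Pg a 0 = a 0 := by
        simp [Pg, Finset.sum_range_succ]
      rw [h2] at h1
      rw [h1]; ring
    rw [show ((ZI 1 : ℝ):ℂ) = ((EE a 1 : ℝ):ℂ) + ((a 0 : ℝ):ℂ) by rw [hZI1]; push_cast; ring]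
    have hterm2 : ∀ (c : ℝ) (k : ℕ), s * ((c:ℂ) * ((Nat.factorial k : ℂ) / (s-1)^(k+1)))
        = (c:ℂ) * (Nat.factorial k : ℂ) / (s-1)^k
          + (c:ℂ) * (Nat.factorial k : ℂ) / (s-1)^(k+1) := by
      intro c k
      have hpk : (s-1)^k ≠ 0 := pow_ne_zero _ hsub
      rw [pow_succ]
      field_simp
      ring
    have hkey : s * (∑ j ∈ Finset.range 5, (a j : ℂ) * ((Nat.factorial j : ℂ) / (s-1) ^ (j+1)))
        = ((Nat.factorial 4 * a 4 : ℝ) : ℂ) / (s - 1) ^ 5 +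
          (∑ j ∈ Finset.range 4,
            ((a j * Nat.factorial j + a (j+1) * Nat.factorial (j+1) : ℝ) : ℂ) / (s - 1) ^ (j+1))
          + ((a 0 : ℝ):ℂ) := by
      rw [Finset.mul_sum]
      simp only [Finset.sum_range_succ, Finset.sum_range_zero]
      rw [hterm2 (a 0) 0, hterm2 (a 1) 1, hterm2 (a 2) 2, hterm2 (a 3) 3, hterm2 (a 4) 4]
      push_cast
      simp only [Nat.factorial_zero, Nat.cast_one, pow_zero]
      ring
    linear_combination -hkey
end
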